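/- arXiv:2406.14788 — 3 statements merged into one kernel-verified Lean document; each statement's English description precedes it below -/
import Mathlib

section
/- There exists a constant C > 0 such that for all x ∈ Q_ρ, all ξ ∈ ℝ, and all ε ∈ (0,1], ∫_{ℝⁿ} |φ(ξ + (d(x+εz)−d(x))/ε) − φ(ξ + ∇d(x)·z)| · |z|^{-(n+2s)} dz ≤ C. In particular the integral defining a_ε(ξ;x) converges absolutely for x ∈ Q_ρ. -/
open MeasureTheory Real Set Filter Metric
open scoped Topology RealInnerProductSpace NNReal

lemma radial_integrable (n : ℕ) (hn : 1 ≤ n) (g : ℝ → ℝ)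
    (h : IntegrableOn (fun r => r ^ (n - 1) * g r) (Ioi (0:ℝ))) :
    Integrable (fun x : EuclideanSpace ℝ (Fin n) => g ‖x‖) := by
  set E := EuclideanSpace ℝ (Fin n)
  haveI : Nonempty (Fin n) := ⟨⟨0, hn⟩⟩
  haveI : Nontrivial E := by
    unfold E
    infer_instance
  have hdim : Module.finrank ℝ E = n := finrank_euclideanSpace_fin
  have key : ∀ (f : ℝ → ℝ), IntegrableOn f (Ioi (0:ℝ)) →
      Integrable (fun r : Ioi (0:ℝ) => f r) ((volume : Measure ℝ).comap Subtype.val) := by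
    intro f hf
    have := (MeasurableEmbedding.subtype_coe (measurableSet_Ioi (a := (0:ℝ)))).integrable_map_iff
      (μ := (volume : Measure ℝ).comap Subtype.val) (g := f)
    rw [map_comap_subtype_coe measurableSet_Ioi] at this
    exact this.mp hf
  have h2 : Integrable (fun r : Ioi (0:ℝ) => g r) (Measure.volumeIoiPow (n - 1)) := by
    rw [Measure.volumeIoiPow, integrable_withDensity_iff_integrable_smul' (by fun_prop)
      (ae_of_all _ fun r => ENNReal.ofReal_lt_top)]
    refine (key (fun r => r ^ (n-1) * g r) h).congr (ae_of_all _ fun r => ?_)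
    simp only [ENNReal.toReal_ofReal (pow_nonneg r.2.out.le (n-1)), smul_eq_mul]
  have h3 : Integrable (fun p : sphere (0:E) 1 × Ioi (0:ℝ) => g p.2.1)
      ((volume : Measure E).toSphere.prod (Measure.volumeIoiPow (n-1))) := by
    have := (integrable_const (μ := (volume : Measure E).toSphere) (1:ℝ)).smul_prod h2
    simpa using this
  have hdim' : Module.finrank ℝ E - 1 = n - 1 := by rw [hdim]
  rw [← hdim'] at h3
  have h4 : Integrable (fun x : ({(0:E)}ᶜ : Set E) => g ‖(x:E)‖)
      ((volume : Measure E).comap Subtype.val) := by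
    have := ((Measure.measurePreserving_homeomorphUnitSphereProd
      (volume : Measure E)).integrable_comp_emb
      (Homeomorph.measurableEmbedding _)).mpr h3
    simpa [Function.comp_def] using this
  have h5 : Integrable (fun x : E => g ‖x‖) ((volume : Measure E).restrict {(0:E)}ᶜ) := by
    rw [← map_comap_subtype_coe (measurableSet_singleton (0:E)).compl]
    exact ((MeasurableEmbedding.subtype_coe
      (measurableSet_singleton (0:E)).compl).integrable_map_iff).mpr h4
  rwa [restrict_compl_singleton] at h5

lemma oneD_integrable (n : ℕ) (hn : 1 ≤ n) (s : ℝ) (hs0 : 0 < s) (hs1 : s < 1)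
    (c : ℝ) (hc : 0 ≤ c) :
    IntegrableOn (fun r : ℝ =>
      r ^ (n - 1) * (min (c * r ^ 2) 1 * r ^ (-((n:ℝ) + 2*s)))) (Ioi (0:ℝ)) := by
  have hcast : ((n - 1 : ℕ) : ℝ) = (n : ℝ) - 1 := by
    push_cast [hn]; ring
  have hmeas : Measurable (fun r : ℝ =>
      r ^ (n - 1) * (min (c * r ^ 2) 1 * r ^ (-((n:ℝ) + 2*s)))) := by fun_prop
  rw [← Ioc_union_Ioi_eq_Ioi (zero_le_one' ℝ)]
  apply IntegrableOn.union
  · -- on Ioc 0 1, dominate by c * r ^ (1 - 2*s)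
    have hint : IntegrableOn (fun r : ℝ => c * r ^ (1 - 2*s)) (Ioc (0:ℝ) 1) := by
      have h1 : IntervalIntegrable (fun r : ℝ => r ^ (1 - 2*s)) volume 0 1 :=
        intervalIntegral.intervalIntegrable_rpow' (by linarith)
      exact ((intervalIntegrable_iff_integrableOn_Ioc_of_le zero_le_one).mp h1).const_mul c
    refine hint.mono' (hmeas.aestronglyMeasurable.restrict) ?_
    refine (ae_restrict_iff' measurableSet_Ioc).2 (ae_of_all _ fun r hr => ?_)
    have hr0 : 0 < r := hr.1
    have hmin0 : 0 ≤ min (c * r ^ 2) 1 := le_min (by positivity) zero_le_one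
    have hrp : (0:ℝ) ≤ r ^ (-((n:ℝ) + 2*s)) := rpow_nonneg hr0.le _
    rw [Real.norm_eq_abs, abs_of_nonneg (by positivity)]
    have key : r ^ (n - 1) * (c * r ^ 2 * r ^ (-((n:ℝ) + 2*s))) = c * r ^ (1 - 2*s) := by
      rw [← Real.rpow_natCast r (n-1), ← Real.rpow_natCast r 2]
      have : r ^ (((n-1:ℕ)):ℝ) * r ^ (((2:ℕ)):ℝ) * r ^ (-((n:ℝ) + 2*s)) = r ^ (1 - 2*s) := by
        rw [← Real.rpow_add hr0, ← Real.rpow_add hr0]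
        congr 1
        rw [hcast]; push_cast; ring
      rw [← this]; ring
    calc r ^ (n - 1) * (min (c * r ^ 2) 1 * r ^ (-((n:ℝ) + 2*s)))
        ≤ r ^ (n - 1) * (c * r ^ 2 * r ^ (-((n:ℝ) + 2*s))) := by
          apply mul_le_mul_of_nonneg_left _ (by positivity)
          exact mul_le_mul_of_nonneg_right (min_le_left _ _) hrp
      _ = c * r ^ (1 - 2*s) := key
  · -- on Ioi 1, dominate by r ^ (-(1 + 2*s))
    have hint : IntegrableOn (fun r : ℝ => r ^ (-(1 + 2*s))) (Ioi (1:ℝ)) :=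
      integrableOn_Ioi_rpow_of_lt (by linarith) zero_lt_one
    refine hint.mono' (hmeas.aestronglyMeasurable.restrict) ?_
    refine (ae_restrict_iff' measurableSet_Ioi).2 (ae_of_all _ fun r hr => ?_)
    have hr0 : (0:ℝ) < r := lt_trans zero_lt_one hr
    have hmin0 : 0 ≤ min (c * r ^ 2) 1 := le_min (by positivity) zero_le_one
    have hrp : (0:ℝ) ≤ r ^ (-((n:ℝ) + 2*s)) := rpow_nonneg hr0.le _
    rw [Real.norm_eq_abs, abs_of_nonneg (by positivity)]
    have key : r ^ (n - 1) * r ^ (-((n:ℝ) + 2*s)) = r ^ (-(1 + 2*s)) := by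
      rw [← Real.rpow_natCast r (n-1), ← Real.rpow_add hr0]
      congr 1
      rw [hcast]; ring
    calc r ^ (n - 1) * (min (c * r ^ 2) 1 * r ^ (-((n:ℝ) + 2*s)))
        ≤ r ^ (n - 1) * (1 * r ^ (-((n:ℝ) + 2*s))) := by
          apply mul_le_mul_of_nonneg_left _ (by positivity)
          exact mul_le_mul_of_nonneg_right (min_le_right _ _) hrp
      _ = r ^ (-(1 + 2*s)) := by rw [one_mul, key]

lemma taylor_est {n : ℕ} {d : EuclideanSpace ℝ (Fin n) → ℝ} {ρ C₂ : ℝ}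
    (hρ : 0 < ρ)
    (hdLip : LipschitzWith 1 d)
    (hsmooth : ContDiffOn ℝ (⊤ : ℕ∞) d {y : EuclideanSpace ℝ (Fin n) | |d y| < 2 * ρ})
    (hhess : ∀ y ∈ {y : EuclideanSpace ℝ (Fin n) | |d y| < 2 * ρ},
      ‖fderiv ℝ (gradient d) y‖ ≤ C₂)
    {x w : EuclideanSpace ℝ (Fin n)} (hx : |d x| < ρ) (hw : ‖w‖ ≤ ρ) :
    |d (x + w) - d x - ⟪gradient d x, w⟫| ≤ C₂ * ‖w‖ ^ 2 := by
  set Q := {y : EuclideanSpace ℝ (Fin n) | |d y| < 2 * ρ} with hQ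
  have hQopen : IsOpen Q := isOpen_lt (hdLip.continuous.abs) continuous_const
  have hxQ : x ∈ Q := by simp only [hQ, Set.mem_setOf_eq]; linarith
  have hC₂0 : 0 ≤ C₂ := (norm_nonneg _).trans (hhess x hxQ)
  have hseg : ∀ t ∈ Icc (0:ℝ) 1, x + t • w ∈ Q := by
    intro t ht
    have h1 : dist (d (x + t • w)) (d x) ≤ 1 * dist (x + t • w) x := hdLip.dist_le_mul _ _
    rw [Real.dist_eq, dist_eq_norm, one_mul, add_sub_cancel_left, norm_smul, Real.norm_eq_abs,
      abs_of_nonneg ht.1] at h1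
    have h2 : t * ‖w‖ ≤ ρ := by nlinarith [ht.2, norm_nonneg w, ht.1]
    have h3 := abs_sub_abs_le_abs_sub (d (x + t • w)) (d x)
    simp only [hQ, Set.mem_setOf_eq]
    linarith
  have hpath : ∀ t : ℝ, HasDerivAt (fun u : ℝ => x + u • w) w t := fun t => by
    simpa using ((hasDerivAt_id t).smul_const w).const_add x
  have hdAt : ∀ y ∈ Q, DifferentiableAt ℝ d y := fun y hy =>
    (hsmooth.contDiffAt (hQopen.mem_nhds hy)).differentiableAt (by simp)
  have hgradAt : ∀ y ∈ Q, DifferentiableAt ℝ (gradient d) y := by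
    intro y hy
    have h1 : ContDiffAt ℝ 1 (fderiv ℝ d) y :=
      (hsmooth.contDiffAt (hQopen.mem_nhds hy)).fderiv_right (by exact_mod_cast ENat.natCast_le_of_coe_top_le_withTop le_rfl 2)
    have h2 : DifferentiableAt ℝ (fderiv ℝ d) y := h1.differentiableAt one_ne_zero
    exact (((InnerProductSpace.toDual ℝ (EuclideanSpace ℝ (Fin n))).symm.toContinuousLinearEquiv).differentiableAt).comp y h2
  set G : ℝ → EuclideanSpace ℝ (Fin n) := fun t => gradient d (x + t • w) with hGdef
  have hGderiv : ∀ t ∈ Icc (0:ℝ) 1,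
      HasDerivWithinAt G ((fderiv ℝ (gradient d) (x + t • w)) w) (Icc 0 1) t := fun t ht => by
    rw [hGdef]; exact (((hgradAt _ (hseg t ht)).hasFDerivAt).comp_hasDerivAt t (hpath t)).hasDerivWithinAt
  have hGbound : ∀ t ∈ Ico (0:ℝ) 1, ‖(fderiv ℝ (gradient d) (x + t • w)) w‖ ≤ C₂ * ‖w‖ :=
    fun t ht => (ContinuousLinearMap.le_opNorm _ _).trans
      (mul_le_mul_of_nonneg_right (hhess _ (hseg t (Ico_subset_Icc_self ht))) (norm_nonneg w))
  have hMVT1 := norm_image_sub_le_of_norm_deriv_le_segment' hGderiv hGbound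
  have hG0 : G 0 = gradient d x := by simp [hGdef]
  set ψ : ℝ → ℝ := fun t => d (x + t • w) - t * ⟪gradient d x, w⟫ with hψdef
  have hψderiv : ∀ t ∈ Icc (0:ℝ) 1,
      HasDerivWithinAt ψ (⟪G t, w⟫ - ⟪gradient d x, w⟫) (Icc 0 1) t := by
    intro t ht
    have h1 : HasDerivAt (fun u : ℝ => d (x + u • w)) ⟪G t, w⟫ t := by
      have h2 := ((hdAt _ (hseg t ht)).hasGradientAt.hasFDerivAt).comp_hasDerivAt t (hpath t)
      simpa [InnerProductSpace.toDual_apply_apply, hGdef, Function.comp_def] using h2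
    exact (h1.sub (hasDerivAt_mul_const _)).hasDerivWithinAt
  have hψbound : ∀ t ∈ Ico (0:ℝ) 1, ‖⟪G t, w⟫ - ⟪gradient d x, w⟫‖ ≤ C₂ * ‖w‖ ^ 2 := by
    intro t ht
    have h1 : ⟪G t, w⟫ - ⟪gradient d x, w⟫ = ⟪G t - gradient d x, w⟫ := (inner_sub_left _ _ _).symm
    have h2 := hMVT1 t (Ico_subset_Icc_self ht)
    rw [hG0] at h2
    rw [h1, Real.norm_eq_abs]
    calc |⟪G t - gradient d x, w⟫| ≤ ‖G t - gradient d x‖ * ‖w‖ := abs_real_inner_le_norm _ _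
      _ ≤ (C₂ * ‖w‖ * (t - 0)) * ‖w‖ := mul_le_mul_of_nonneg_right h2 (norm_nonneg w)
      _ ≤ C₂ * ‖w‖ ^ 2 := by
          nlinarith [mul_nonneg (mul_nonneg hC₂0 (mul_nonneg (norm_nonneg w) (norm_nonneg w)))
            (sub_nonneg.2 ht.2.le)]
  have hfinal := norm_image_sub_le_of_norm_deriv_le_segment_01' hψderiv hψbound
  have h9 : ψ 1 - ψ 0 = d (x + w) - d x - ⟪gradient d x, w⟫ := by
    simp only [hψdef, one_smul, zero_smul, add_zero, one_mul, zero_mul, sub_zero]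
    ring
  rwa [h9, Real.norm_eq_abs] at hfinal
/-- **Absolute convergence of the integral defining `a_ε`.** There is `C > 0` such that
for all `x ∈ Q_ρ`, `ξ ∈ ℝ` and `ε ∈ (0,1]`, the integrand of `a_ε(ξ;x)` is integrable
and `∫_{ℝⁿ} |φ(ξ + (d(x+εz)−d(x))/ε) − φ(ξ + ∇d(x)·z)|·|z|^{-(n+2s)} dz ≤ C`. -/
theorem aeps_integrand_absolutely_integrable
    (n : ℕ) (hn : 2 ≤ n) (s : ℝ) (hs : s ∈ Set.Ioo (0 : ℝ) 1)
    (Ω : Set (EuclideanSpace ℝ (Fin n))) (hΩopen : IsOpen Ω) (hΩconn : IsConnected Ω)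
    (d : EuclideanSpace ℝ (Fin n) → ℝ)
    (hd : ∀ x : EuclideanSpace ℝ (Fin n),
      (x ∈ Ω → d x = Metric.infDist x (frontier Ω)) ∧
      (x ∉ Ω → d x = -Metric.infDist x (frontier Ω)))
    (hdLip : LipschitzWith 1 d)
    (ρ : ℝ) (hρ : 0 < ρ)
    (hsmooth : ContDiffOn ℝ (⊤ : ℕ∞) d {x : EuclideanSpace ℝ (Fin n) | |d x| < 2 * ρ})
    (hgrad : ∀ x ∈ {x : EuclideanSpace ℝ (Fin n) | |d x| < 2 * ρ}, ‖gradient d x‖ = 1)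
    (C₂ : ℝ) (hhess : ∀ x ∈ {x : EuclideanSpace ℝ (Fin n) | |d x| < 2 * ρ},
      ‖fderiv ℝ (gradient d) x‖ ≤ C₂)
    (φ : ℝ → ℝ) (hφmem : ∀ ξ : ℝ, φ ξ ∈ Set.Ioo (0 : ℝ) 1)
    (K : ℝ≥0) (hφLip : LipschitzWith K φ) :
    ∃ C : ℝ, 0 < C ∧ ∀ x ∈ {x : EuclideanSpace ℝ (Fin n) | |d x| < ρ},
      ∀ ξ : ℝ, ∀ ε : ℝ, 0 < ε → ε ≤ 1 →
        (Integrable (fun z : EuclideanSpace ℝ (Fin n) =>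
          (φ (ξ + (d (x + ε • z) - d x) / ε) - φ (ξ + ⟪gradient d x, z⟫))
            / ‖z‖ ^ ((n : ℝ) + 2*s))) ∧
        (∫ z : EuclideanSpace ℝ (Fin n),
          |φ (ξ + (d (x + ε • z) - d x) / ε) - φ (ξ + ⟪gradient d x, z⟫)|
            / ‖z‖ ^ ((n : ℝ) + 2*s)) ≤ C := by
  obtain ⟨hs0, hs1⟩ := hs
  set ρ₀ : ℝ := min ρ 1 with hρ₀def
  have hρ₀pos : 0 < ρ₀ := lt_min hρ zero_lt_one
  set K₃ : ℝ := max ((K : ℝ) * C₂) (1 / (ρ₀ * ρ₀)) with hK₃def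
  have hK₃pos : 0 < K₃ := lt_of_lt_of_le (by positivity) (le_max_right _ _)
  set g : ℝ → ℝ := fun r => min (K₃ * r ^ 2) 1 * r ^ (-((n:ℝ) + 2*s)) with hgdef
  have hG : Integrable (fun z : EuclideanSpace ℝ (Fin n) => g ‖z‖) :=
    radial_integrable n (by omega) g (oneD_integrable n (by omega) s hs0 hs1 K₃ hK₃pos.le)
  have hGnonneg : ∀ z : EuclideanSpace ℝ (Fin n), 0 ≤ g ‖z‖ := fun z =>
    mul_nonneg (le_min (by positivity) zero_le_one) (rpow_nonneg (norm_nonneg z) _)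
  have hintnn : 0 ≤ ∫ z : EuclideanSpace ℝ (Fin n), g ‖z‖ := integral_nonneg hGnonneg
  refine ⟨(∫ z : EuclideanSpace ℝ (Fin n), g ‖z‖) + 1, by linarith, ?_⟩
  intro x hx ξ ε hε hε1
  simp only [Set.mem_setOf_eq] at hx
  have hxQ : x ∈ {y : EuclideanSpace ℝ (Fin n) | |d y| < 2 * ρ} := by
    simp only [Set.mem_setOf_eq]; linarith
  have hC₂0 : 0 ≤ C₂ := (norm_nonneg _).trans (hhess x hxQ)
  set num : EuclideanSpace ℝ (Fin n) → ℝ :=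
    fun z => φ (ξ + (d (x + ε • z) - d x) / ε) - φ (ξ + ⟪gradient d x, z⟫) with hnumdef
  -- pointwise bound on the numerator
  have hnum_le : ∀ z : EuclideanSpace ℝ (Fin n), |num z| ≤ min (K₃ * ‖z‖ ^ 2) 1 := by
    intro z
    have h1 := hφmem (ξ + (d (x + ε • z) - d x) / ε)
    have h2 := hφmem (ξ + ⟪gradient d x, z⟫)
    have hone : |num z| ≤ 1 := by
      rw [hnumdef, abs_le]
      constructor
      · linarith [h1.1, h2.2]
      · linarith [h1.2, h2.1]
    rcases le_or_gt ‖z‖ ρ₀ with hz | hz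
    · refine le_min ?_ hone
      have hnormsm : ‖ε • z‖ = ε * ‖z‖ := by
        rw [norm_smul, Real.norm_eq_abs, abs_of_pos hε]
      have hw : ‖ε • z‖ ≤ ρ := by
        rw [hnormsm]
        have h3 : ρ₀ ≤ ρ := min_le_left _ _
        nlinarith [norm_nonneg z]
      have hT := taylor_est hρ hdLip hsmooth hhess hx hw
      have hinner : ⟪gradient d x, ε • z⟫ = ε * ⟪gradient d x, z⟫ :=
        real_inner_smul_right _ _ _
      have hK := hφLip.dist_le_mul (ξ + (d (x + ε • z) - d x) / ε) (ξ + ⟪gradient d x, z⟫)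
      rw [Real.dist_eq, Real.dist_eq] at hK
      have hsub : (ξ + (d (x + ε • z) - d x) / ε) - (ξ + ⟪gradient d x, z⟫)
          = (d (x + ε • z) - d x - ⟪gradient d x, ε • z⟫) / ε := by
        rw [hinner]; field_simp; ring
      rw [hsub] at hK
      have habs2 : |(d (x + ε • z) - d x - ⟪gradient d x, ε • z⟫) / ε| ≤ C₂ * ε * ‖z‖ ^ 2 := by
        rw [abs_div, abs_of_pos hε, div_le_iff₀ hε]
        calc |d (x + ε • z) - d x - ⟪gradient d x, ε • z⟫| ≤ C₂ * ‖ε • z‖ ^ 2 := hT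
          _ = C₂ * ε * ‖z‖ ^ 2 * ε := by rw [hnormsm]; ring
      have hKC : (K : ℝ) * C₂ ≤ K₃ := le_max_left _ _
      calc |num z| ≤ (K : ℝ) * (C₂ * ε * ‖z‖ ^ 2) :=
            hK.trans (mul_le_mul_of_nonneg_left habs2 K.coe_nonneg)
        _ ≤ K₃ * ‖z‖ ^ 2 := by
            nlinarith [sq_nonneg ‖z‖, K.coe_nonneg,
              mul_nonneg (mul_nonneg K.coe_nonneg hC₂0) (sq_nonneg ‖z‖)]
    · have hle1 : (1:ℝ) ≤ K₃ * ‖z‖ ^ 2 := by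
        have h2 : 1 / (ρ₀ * ρ₀) ≤ K₃ := le_max_right _ _
        have h3 : ρ₀ * ρ₀ ≤ ‖z‖ ^ 2 := by nlinarith
        calc (1:ℝ) = (1 / (ρ₀ * ρ₀)) * (ρ₀ * ρ₀) := by field_simp
          _ ≤ K₃ * ‖z‖ ^ 2 := mul_le_mul h2 h3 (by positivity) hK₃pos.le
      rw [min_eq_right hle1]
      exact hone
  have habs : ∀ z : EuclideanSpace ℝ (Fin n),
      |num z| / ‖z‖ ^ ((n:ℝ) + 2*s) ≤ g ‖z‖ := by
    intro z
    rw [div_eq_mul_inv, ← Real.rpow_neg (norm_nonneg z)]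
    exact mul_le_mul_of_nonneg_right (hnum_le z) (Real.rpow_nonneg (norm_nonneg z) _)
  have hnum_cont : Continuous num := by
    have hd_cont : Continuous d := hdLip.continuous
    have hφ_cont : Continuous φ := hφLip.continuous
    apply Continuous.sub
    · exact hφ_cont.comp (continuous_const.add
        (((hd_cont.comp (continuous_const.add (continuous_id.const_smul ε))).sub
          continuous_const).div_const ε))
    · exact hφ_cont.comp (continuous_const.add
        (Continuous.inner continuous_const continuous_id))
  have hf_aesm : AEStronglyMeasurable
      (fun z : EuclideanSpace ℝ (Fin n) => num z / ‖z‖ ^ ((n:ℝ) + 2*s)) volume :=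
    (hnum_cont.measurable.div (by fun_prop)).aestronglyMeasurable
  have hInt : Integrable
      (fun z : EuclideanSpace ℝ (Fin n) => num z / ‖z‖ ^ ((n:ℝ) + 2*s)) := by
    refine hG.mono' hf_aesm (ae_of_all _ fun z => ?_)
    rw [Real.norm_eq_abs, abs_div, abs_of_nonneg (Real.rpow_nonneg (norm_nonneg z) _)]
    exact habs z
  refine ⟨hInt, ?_⟩
  have hInt2 : Integrable
      (fun z : EuclideanSpace ℝ (Fin n) => |num z| / ‖z‖ ^ ((n:ℝ) + 2*s)) := by
    refine hInt.abs.congr (ae_of_all _ fun z => ?_)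
    simp only [abs_div, abs_of_nonneg (Real.rpow_nonneg (norm_nonneg z) ((n:ℝ) + 2*s))]
  have hle := integral_mono hInt2 hG habs
  linarith
end

section
/- Let n ≥ 2 and s ∈ (0,1/2). There exist τ₀ > 0 and R > 0 such that for all 0 < τ ≤ τ₀, all 0 ≤ σ < τ/2, and all x ∈ Q_ρ: ∫_{{z : d(x+z) > d(x)−σ and −τ < ∇d(x)·z < −2σ}} |z|^{-(n+2s)} dz ≤ ∫_{{y=(y',y_n) : |y_n| < τ and |y_n| < R|y'|²}} |y|^{-(n+2s)} dy, and ∫_{{z : d(x+z) < d(x)+σ and 2σ < ∇d(x)·z < τ}} |z|^{-(n+2s)} dz ≤ ∫_{{y=(y',y_n) : |y_n| < τ and |y_n| < R|y'|²}} |y|^{-(n+2s)} dy. -/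
open MeasureTheory Real Set Filter Metric
open scoped Topology RealInnerProductSpace ENNReal

namespace KernelAux
lemma tsum_ofReal_geom_mul_lt_top (c ρ : ℝ) (hc : 0 ≤ c) (hρ0 : 0 ≤ ρ) (hρ1 : ρ < 1)
    (V : ℝ≥0∞) (hV : V < ⊤) :
    ∑' k : ℕ, ENNReal.ofReal (c * ρ ^ k) * V < ⊤ := by
  have h1 : ∀ k : ℕ, ENNReal.ofReal (c * ρ ^ k) * V
      = (ENNReal.ofReal c * V) * (ENNReal.ofReal ρ) ^ k := by
    intro k
    rw [ENNReal.ofReal_mul hc, ENNReal.ofReal_pow hρ0]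
    ring
  rw [tsum_congr h1, ENNReal.tsum_mul_left, ENNReal.tsum_geometric]
  refine ENNReal.mul_lt_top ?_ ?_
  · exact ENNReal.mul_lt_top ENNReal.ofReal_lt_top hV
  · rw [ENNReal.inv_lt_top]
    exact tsub_pos_of_lt (by simpa using ENNReal.ofReal_lt_one.2 hρ1)

variable {m : ℕ}

lemma L1 (m : ℕ) (hm : 1 ≤ m) (q : ℝ) (hq0 : 0 < q) (hqm : q < m) :
    ∫⁻ w in Metric.ball (0 : EuclideanSpace ℝ (Fin m)) 1, ENNReal.ofReal (‖w‖ ^ (-q)) < ⊤ := by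
  haveI : Nonempty (Fin m) := ⟨⟨0, hm⟩⟩
  haveI : Nontrivial (EuclideanSpace ℝ (Fin m)) := by
    infer_instance
  set c : ℝ := 1/2 with hc
  have hc0 : (0:ℝ) < c := by norm_num
  have hc1 : c < 1 := by norm_num
  set V := volume (Metric.ball (0 : EuclideanSpace ℝ (Fin m)) 1) with hVdef
  have hV : V < ⊤ := measure_ball_lt_top
  set A : ℕ → Set (EuclideanSpace ℝ (Fin m)) :=
    fun k => {w | ‖w‖ ∈ Set.Ico (c ^ (k+1)) (c ^ k)} with hA
  -- cover
  have hcover : Metric.ball (0 : EuclideanSpace ℝ (Fin m)) 1 ⊆ {0} ∪ ⋃ k, A k := by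
    intro w hw
    rcases eq_or_ne w 0 with h0 | h0
    · exact Or.inl h0
    right
    have hw0 : 0 < ‖w‖ := norm_pos_iff.2 h0
    have hw1 : ‖w‖ < 1 := by simpa using mem_ball_iff_norm.1 hw
    have hex : ∃ j : ℕ, c ^ (j+1) ≤ ‖w‖ := by
      obtain ⟨j, hj⟩ := exists_pow_lt_of_lt_one hw0 hc1
      exact ⟨j, le_of_lt (lt_of_le_of_lt (pow_le_pow_of_le_one hc0.le hc1.le (Nat.le_succ j)) hj)⟩
    set k := Nat.find hex with hk
    refine Set.mem_iUnion.2 ⟨k, Nat.find_spec hex, ?_⟩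
    rcases Nat.eq_zero_or_pos k with hk0 | hk0
    · rw [hk0]; simpa using hw1
    · have := Nat.find_min hex (show k - 1 < k by omega)
      have hkk : k - 1 + 1 = k := by omega
      rw [hkk] at this
      exact lt_of_not_ge this
  calc ∫⁻ w in Metric.ball (0 : EuclideanSpace ℝ (Fin m)) 1, ENNReal.ofReal (‖w‖ ^ (-q))
      ≤ ∫⁻ w in ({0} ∪ ⋃ k, A k), ENNReal.ofReal (‖w‖ ^ (-q)) := lintegral_mono_set hcover
    _ ≤ (∫⁻ w in ({0} : Set (EuclideanSpace ℝ (Fin m))), ENNReal.ofReal (‖w‖ ^ (-q)))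
        + ∫⁻ w in (⋃ k, A k), ENNReal.ofReal (‖w‖ ^ (-q)) := lintegral_union_le _ _ _
    _ ≤ 0 + ∑' k, ∫⁻ w in A k, ENNReal.ofReal (‖w‖ ^ (-q)) := by
        gcongr
        · exact le_of_eq (setLIntegral_measure_zero _ _ (measure_singleton 0))
        · exact lintegral_iUnion_le _ _
    _ ≤ ∑' k, ENNReal.ofReal ((c^(k+1)) ^ (-q) * (c^m)^k) * V := by
        rw [zero_add]
        refine ENNReal.tsum_le_tsum fun k => ?_
        have hAmeas : MeasurableSet (A k) := measurable_norm (measurableSet_Ico)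
        have hbd : ∀ w ∈ A k, ENNReal.ofReal (‖w‖ ^ (-q)) ≤ ENNReal.ofReal ((c^(k+1)) ^ (-q)) := by
          intro w hw
          exact ENNReal.ofReal_le_ofReal
            (Real.rpow_le_rpow_of_nonpos (pow_pos hc0 _) hw.1 (neg_nonpos.2 hq0.le))
        calc ∫⁻ w in A k, ENNReal.ofReal (‖w‖ ^ (-q))
            ≤ ∫⁻ _ in A k, ENNReal.ofReal ((c^(k+1)) ^ (-q)) := setLIntegral_mono' hAmeas hbd
          _ = ENNReal.ofReal ((c^(k+1)) ^ (-q)) * volume (A k) := setLIntegral_const _ _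
          _ ≤ ENNReal.ofReal ((c^(k+1)) ^ (-q)) *
                (ENNReal.ofReal ((c^k) ^ m) * V) := by
              gcongr
              have hsub : A k ⊆ Metric.ball (0 : EuclideanSpace ℝ (Fin m)) (c^k) := by
                intro w hw
                simpa [mem_ball_iff_norm] using hw.2
              refine le_trans (measure_mono hsub) (le_of_eq ?_)
              rw [Measure.addHaar_ball volume 0 (pow_pos hc0 k).le, finrank_euclideanSpace_fin]
          _ = ENNReal.ofReal ((c^(k+1)) ^ (-q) * (c^m)^k) * V := by
              rw [ENNReal.ofReal_mul (Real.rpow_nonneg (pow_pos hc0 _).le _), mul_assoc]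
              congr 2
              rw [← pow_mul, ← pow_mul, Nat.mul_comm]
    _ < ⊤ := by
        have key : ∀ k : ℕ, (c^(k+1)) ^ (-q) * (c^m)^k = c ^ (-q) * (c ^ ((m:ℝ) - q))^k := by
          intro k
          have h1 : ((c ^ (k+1) : ℝ)) ^ (-q) = (c ^ (-q)) ^ (k+1) := by
            rw [← Real.rpow_natCast c (k+1), ← Real.rpow_natCast (c ^ (-q)) (k+1),
              ← Real.rpow_mul hc0.le, ← Real.rpow_mul hc0.le, mul_comm]
          have h2 : ((c:ℝ) ^ m) ^ k = (c ^ ((m:ℝ)))^k := by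
            rw [Real.rpow_natCast]
          rw [h1, h2, pow_succ]
          have h3 : c ^ ((m:ℝ) - q) = c ^ (-q) * c ^ ((m:ℝ)) := by
            rw [← Real.rpow_add hc0]; ring_nf
          rw [h3, mul_pow]
          ring
        have hρ1 : c ^ ((m:ℝ) - q) < 1 :=
          Real.rpow_lt_one hc0.le hc1 (by linarith)
        calc ∑' k, ENNReal.ofReal ((c^(k+1)) ^ (-q) * (c^m)^k) * V
            = ∑' k, ENNReal.ofReal (c ^ (-q) * (c ^ ((m:ℝ) - q))^k) * V := by
              exact tsum_congr fun k => by rw [key k]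
          _ < ⊤ := tsum_ofReal_geom_mul_lt_top _ _ (Real.rpow_nonneg hc0.le _)
              (Real.rpow_nonneg hc0.le _) hρ1 V hV

lemma L2 (m : ℕ) (hm : 1 ≤ m) (q : ℝ) (hqm : (m:ℝ) < q) :
    ∫⁻ w in (Metric.ball (0 : EuclideanSpace ℝ (Fin m)) 1)ᶜ,
      ENNReal.ofReal (‖w‖ ^ (-q)) < ⊤ := by
  haveI : Nonempty (Fin m) := ⟨⟨0, hm⟩⟩
  haveI : Nontrivial (EuclideanSpace ℝ (Fin m)) := by infer_instance
  have hq0 : 0 < q := lt_of_le_of_lt (by exact_mod_cast Nat.zero_le m) hqm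
  set V := volume (Metric.ball (0 : EuclideanSpace ℝ (Fin m)) 1) with hVdef
  have hV : V < ⊤ := measure_ball_lt_top
  set A : ℕ → Set (EuclideanSpace ℝ (Fin m)) :=
    fun k => {w | ‖w‖ ∈ Set.Ico ((2:ℝ) ^ k) ((2:ℝ) ^ (k+1))} with hA
  have hcover : (Metric.ball (0 : EuclideanSpace ℝ (Fin m)) 1)ᶜ ⊆ ⋃ k, A k := by
    intro w hw
    have hw1 : 1 ≤ ‖w‖ := by
      have := mem_ball_iff_norm.not.1 hw
      push_neg at this
      simpa using this
    have hex : ∃ j : ℕ, ‖w‖ < 2 ^ (j+1) := by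
      obtain ⟨j, hj⟩ := pow_unbounded_of_one_lt ‖w‖ (by norm_num : (1:ℝ) < 2)
      exact ⟨j, lt_of_lt_of_le hj (pow_le_pow_right₀ (by norm_num) (Nat.le_succ j))⟩
    set k := Nat.find hex with hk
    refine Set.mem_iUnion.2 ⟨k, ?_, Nat.find_spec hex⟩
    rcases Nat.eq_zero_or_pos k with hk0 | hk0
    · rw [hk0]; simpa using hw1
    · have := Nat.find_min hex (show k - 1 < k by omega)
      have hkk : k - 1 + 1 = k := by omega
      rw [hkk] at this
      exact le_of_not_gt this
  calc ∫⁻ w in (Metric.ball (0 : EuclideanSpace ℝ (Fin m)) 1)ᶜ, ENNReal.ofReal (‖w‖ ^ (-q))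
      ≤ ∫⁻ w in (⋃ k, A k), ENNReal.ofReal (‖w‖ ^ (-q)) := lintegral_mono_set hcover
    _ ≤ ∑' k, ∫⁻ w in A k, ENNReal.ofReal (‖w‖ ^ (-q)) := lintegral_iUnion_le _ _
    _ ≤ ∑' k, ENNReal.ofReal (((2:ℝ)^k) ^ (-q) * ((2:ℝ)^m)^(k+1)) * V := by
        refine ENNReal.tsum_le_tsum fun k => ?_
        have hAmeas : MeasurableSet (A k) := measurable_norm (measurableSet_Ico)
        have hbd : ∀ w ∈ A k, ENNReal.ofReal (‖w‖ ^ (-q))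
            ≤ ENNReal.ofReal (((2:ℝ)^k) ^ (-q)) := by
          intro w hw
          exact ENNReal.ofReal_le_ofReal
            (Real.rpow_le_rpow_of_nonpos (pow_pos two_pos _) hw.1 (neg_nonpos.2 hq0.le))
        calc ∫⁻ w in A k, ENNReal.ofReal (‖w‖ ^ (-q))
            ≤ ∫⁻ _ in A k, ENNReal.ofReal (((2:ℝ)^k) ^ (-q)) := setLIntegral_mono' hAmeas hbd
          _ = ENNReal.ofReal (((2:ℝ)^k) ^ (-q)) * volume (A k) := setLIntegral_const _ _
          _ ≤ ENNReal.ofReal (((2:ℝ)^k) ^ (-q)) *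
                (ENNReal.ofReal (((2:ℝ)^(k+1)) ^ m) * V) := by
              gcongr
              have hsub : A k ⊆ Metric.ball (0 : EuclideanSpace ℝ (Fin m)) ((2:ℝ)^(k+1)) := by
                intro w hw
                simpa [mem_ball_iff_norm] using hw.2
              refine le_trans (measure_mono hsub) (le_of_eq ?_)
              rw [Measure.addHaar_ball volume 0 (pow_pos two_pos (k+1)).le,
                finrank_euclideanSpace_fin]
          _ = ENNReal.ofReal (((2:ℝ)^k) ^ (-q) * ((2:ℝ)^m)^(k+1)) * V := by
              rw [ENNReal.ofReal_mul (Real.rpow_nonneg (pow_pos two_pos _).le _), mul_assoc]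
              congr 2
              rw [← pow_mul, ← pow_mul, Nat.mul_comm]
    _ < ⊤ := by
        have key : ∀ k : ℕ, ((2:ℝ)^k) ^ (-q) * ((2:ℝ)^m)^(k+1)
            = (2:ℝ) ^ ((m:ℝ)) * ((2:ℝ) ^ ((m:ℝ) - q))^k := by
          intro k
          have h1 : (((2:ℝ) ^ k)) ^ (-q) = ((2:ℝ) ^ (-q)) ^ k := by
            rw [← Real.rpow_natCast (2:ℝ) k, ← Real.rpow_natCast ((2:ℝ) ^ (-q)) k,
              ← Real.rpow_mul (by norm_num), ← Real.rpow_mul (by norm_num), mul_comm]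
          have h2 : (((2:ℝ)) ^ m) ^ (k+1) = ((2:ℝ) ^ ((m:ℝ)))^(k+1) := by
            rw [Real.rpow_natCast]
          rw [h1, h2, pow_succ]
          have h3 : (2:ℝ) ^ ((m:ℝ) - q) = (2:ℝ) ^ (-q) * (2:ℝ) ^ ((m:ℝ)) := by
            rw [← Real.rpow_add (by norm_num)]; ring_nf
          rw [h3, mul_pow]
          ring
        have hρ1 : (2:ℝ) ^ ((m:ℝ) - q) < 1 :=
          Real.rpow_lt_one_of_one_lt_of_neg (by norm_num) (by linarith)
        calc ∑' k, ENNReal.ofReal (((2:ℝ)^k) ^ (-q) * ((2:ℝ)^m)^(k+1)) * V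
            = ∑' k, ENNReal.ofReal ((2:ℝ) ^ ((m:ℝ)) * ((2:ℝ) ^ ((m:ℝ) - q))^k) * V :=
              tsum_congr fun k => by rw [key k]
          _ < ⊤ := tsum_ofReal_geom_mul_lt_top _ _ (Real.rpow_nonneg (by norm_num) _)
              (Real.rpow_nonneg (by norm_num) _) hρ1 V hV

lemma Lrad (m : ℕ) (hm : 1 ≤ m) (p τ R : ℝ) (hτ : 0 < τ) (hR : 0 < R)
    (hp2 : 2 < p) (hpm : (m:ℝ) < p) (hpm2 : p < (m:ℝ) + 2) :
    ∫⁻ w : EuclideanSpace ℝ (Fin m),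
      ENNReal.ofReal (‖w‖ ^ (-p)) * ENNReal.ofReal (2 * min τ (R * ‖w‖^2)) < ⊤ := by
  rw [← lintegral_add_compl _
    (measurableSet_ball : MeasurableSet (Metric.ball (0 : EuclideanSpace ℝ (Fin m)) 1))]
  refine ENNReal.add_lt_top.2 ⟨?_, ?_⟩
  · have hb : ∀ w ∈ Metric.ball (0 : EuclideanSpace ℝ (Fin m)) 1,
        ENNReal.ofReal (‖w‖ ^ (-p)) * ENNReal.ofReal (2 * min τ (R * ‖w‖^2))
          ≤ ENNReal.ofReal (2*R) * ENNReal.ofReal (‖w‖ ^ (-(p-2))) := by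
      intro w _
      have hid : ‖w‖ ^ (-(p-2)) = ‖w‖ ^ (-p) * ‖w‖^2 := by
        rw [show -(p-2) = -p + 2 by ring,
          Real.rpow_add' (norm_nonneg w) (by intro h; nlinarith)]
        congr 1
        rw [← Real.rpow_natCast ‖w‖ 2]
        norm_num
      calc ENNReal.ofReal (‖w‖ ^ (-p)) * ENNReal.ofReal (2 * min τ (R * ‖w‖^2))
          ≤ ENNReal.ofReal (‖w‖ ^ (-p)) * ENNReal.ofReal (2 * (R * ‖w‖^2)) :=
            mul_le_mul_right (ENNReal.ofReal_le_ofReal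
              (mul_le_mul_of_nonneg_left (min_le_right _ _) (by norm_num))) _
        _ = ENNReal.ofReal (‖w‖ ^ (-p) * (2 * (R * ‖w‖^2))) :=
            (ENNReal.ofReal_mul (Real.rpow_nonneg (norm_nonneg w) _)).symm
        _ = ENNReal.ofReal ((2*R) * ‖w‖ ^ (-(p-2))) := by rw [hid]; ring_nf
        _ = ENNReal.ofReal (2*R) * ENNReal.ofReal (‖w‖ ^ (-(p-2))) :=
            ENNReal.ofReal_mul (by positivity)
    calc ∫⁻ w in Metric.ball (0 : EuclideanSpace ℝ (Fin m)) 1,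
          ENNReal.ofReal (‖w‖ ^ (-p)) * ENNReal.ofReal (2 * min τ (R * ‖w‖^2))
        ≤ ∫⁻ w in Metric.ball (0 : EuclideanSpace ℝ (Fin m)) 1,
            ENNReal.ofReal (2*R) * ENNReal.ofReal (‖w‖ ^ (-(p-2))) :=
          setLIntegral_mono' measurableSet_ball hb
      _ = ENNReal.ofReal (2*R) * ∫⁻ w in Metric.ball (0 : EuclideanSpace ℝ (Fin m)) 1,
            ENNReal.ofReal (‖w‖ ^ (-(p-2))) := lintegral_const_mul' _ _ ENNReal.ofReal_ne_top
      _ < ⊤ := ENNReal.mul_lt_top ENNReal.ofReal_lt_top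
          (L1 m hm (p-2) (by linarith) (by linarith))
  · have hb : ∀ w ∈ (Metric.ball (0 : EuclideanSpace ℝ (Fin m)) 1)ᶜ,
        ENNReal.ofReal (‖w‖ ^ (-p)) * ENNReal.ofReal (2 * min τ (R * ‖w‖^2))
          ≤ ENNReal.ofReal (2*τ) * ENNReal.ofReal (‖w‖ ^ (-p)) := by
      intro w _
      rw [mul_comm (ENNReal.ofReal (2*τ))]
      exact mul_le_mul_right (ENNReal.ofReal_le_ofReal
        (mul_le_mul_of_nonneg_left (min_le_left _ _) (by norm_num))) _
    calc ∫⁻ w in (Metric.ball (0 : EuclideanSpace ℝ (Fin m)) 1)ᶜ,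
          ENNReal.ofReal (‖w‖ ^ (-p)) * ENNReal.ofReal (2 * min τ (R * ‖w‖^2))
        ≤ ∫⁻ w in (Metric.ball (0 : EuclideanSpace ℝ (Fin m)) 1)ᶜ,
            ENNReal.ofReal (2*τ) * ENNReal.ofReal (‖w‖ ^ (-p)) :=
          setLIntegral_mono' measurableSet_ball.compl hb
      _ = ENNReal.ofReal (2*τ) * ∫⁻ w in (Metric.ball (0 : EuclideanSpace ℝ (Fin m)) 1)ᶜ,
            ENNReal.ofReal (‖w‖ ^ (-p)) := lintegral_const_mul' _ _ ENNReal.ofReal_ne_top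
      _ < ⊤ := ENNReal.mul_lt_top ENNReal.ofReal_lt_top (L2 m hm p hpm)

lemma norm_sq_eq {ι : Type*} [Fintype ι] (y : EuclideanSpace ℝ ι) :
    ‖y‖^2 = ∑ j, (y j)^2 := by
  rw [EuclideanSpace.norm_eq, Real.sq_sqrt (by positivity)]
  exact Finset.sum_congr rfl fun j _ => by rw [Real.norm_eq_abs, sq_abs]

lemma lintegral_cusp_lt_top (m : ℕ) (hm : 1 ≤ m) (p τ R : ℝ) (hτ : 0 < τ) (hR : 0 < R)
    (hp2 : 2 < p) (hpm : (m:ℝ) < p) (hpm2 : p < (m:ℝ) + 2) :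
    ∫⁻ y in {y : EuclideanSpace ℝ (Fin (m+1)) |
        |y (Fin.last m)| < τ ∧ |y (Fin.last m)| < R * (‖y‖^2 - (y (Fin.last m))^2)},
      ENNReal.ofReal (‖y‖ ^ (-p)) < ⊤ := by
  set i : Fin (m+1) := Fin.last m with hi
  set B : Set (EuclideanSpace ℝ (Fin (m+1))) :=
    {y | |y i| < τ ∧ |y i| < R * (‖y‖^2 - (y i)^2)} with hB
  have hconti : Continuous fun y : EuclideanSpace ℝ (Fin (m+1)) => y i :=
    (EuclideanSpace.proj i).continuous
  have hBopen : IsOpen B := by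
    refine IsOpen.inter ?_ ?_
    · exact isOpen_lt hconti.abs continuous_const
    · exact isOpen_lt hconti.abs (by fun_prop)
  have hBmeas : MeasurableSet B := hBopen.measurableSet
  have hsplit : ∀ y : EuclideanSpace ℝ (Fin (m+1)),
      ‖y‖^2 - (y i)^2 = ∑ j : Fin m, (y (Fin.castSucc j))^2 := by
    intro y
    rw [norm_sq_eq y, Fin.sum_univ_castSucc]
    simp [hi]
  set u : EuclideanSpace ℝ (Fin (m+1)) → ℝ := fun y => Real.sqrt (‖y‖^2 - (y i)^2) with hu
  -- Step A : pointwise bound on B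
  have stepA : ∫⁻ y in B, ENNReal.ofReal (‖y‖ ^ (-p))
      ≤ ∫⁻ y in B, ENNReal.ofReal (u y ^ (-p)) := by
    refine setLIntegral_mono' hBmeas fun y hy => ?_
    have h1 : 0 < ‖y‖^2 - (y i)^2 := by
      have h2 := hy.2
      have h3 : (0:ℝ) ≤ |y i| := abs_nonneg _
      nlinarith
    have hupos : 0 < u y := Real.sqrt_pos.2 h1
    have huy : u y ≤ ‖y‖ := by
      rw [hu]
      calc Real.sqrt (‖y‖^2 - (y i)^2) ≤ Real.sqrt (‖y‖^2) :=
            Real.sqrt_le_sqrt (by nlinarith [sq_nonneg (y i)])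
        _ = ‖y‖ := Real.sqrt_sq (norm_nonneg y)
    exact ENNReal.ofReal_le_ofReal
      (Real.rpow_le_rpow_of_nonpos hupos huy (by linarith))
  refine lt_of_le_of_lt stepA ?_
  -- indicator form
  rw [← lintegral_indicator hBmeas]
  -- the product-space function
  set S : (Fin m → ℝ) → ℝ := fun w => ∑ j, (w j)^2 with hS
  have hScont : Continuous S := by fun_prop
  set T : Set (ℝ × (Fin m → ℝ)) := {q | |q.1| < τ ∧ |q.1| < R * S q.2} with hT
  have hTmeas : MeasurableSet T := by
    refine (IsOpen.inter ?_ ?_).measurableSet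
    · exact isOpen_lt continuous_fst.abs continuous_const
    · exact isOpen_lt continuous_fst.abs (by fun_prop)
  set F : ℝ × (Fin m → ℝ) → ℝ≥0∞ :=
    T.indicator (fun q => ENNReal.ofReal ((Real.sqrt (S q.2)) ^ (-p))) with hF
  have hFmeas : Measurable F := by
    refine Measurable.indicator ?_ hTmeas
    fun_prop
  set φ := (MeasurableEquiv.toLp 2 (Fin (m+1) → ℝ)).symm with hφ
  set ψ := MeasurableEquiv.piFinSuccAbove (fun _ : Fin (m+1) => ℝ) (Fin.last m) with hψ
  have hcomp : ∀ y : EuclideanSpace ℝ (Fin (m+1)),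
      B.indicator (fun y => ENNReal.ofReal (u y ^ (-p))) y = F (ψ (φ y)) := by
    intro y
    have h1 : ψ (φ y) = (y i, fun j => y (Fin.castSucc j)) := by
      rw [hψ, hφ]
      ext
      · simp [MeasurableEquiv.piFinSuccAbove_apply, MeasurableEquiv.toLp, hi]; rfl
      · simp [MeasurableEquiv.piFinSuccAbove_apply, MeasurableEquiv.toLp,
          Fin.succAbove_last, Fin.init]; rfl
    rw [h1, hF]
    have hTS : ((y i, fun j => y (Fin.castSucc j)) : ℝ × (Fin m → ℝ)) ∈ T ↔ y ∈ B := by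
      simp only [hT, Set.mem_setOf_eq, hB, hS]
      rw [hsplit y]
    have hval : (Real.sqrt (S (fun j => y (Fin.castSucc j)))) = u y := by
      simp only [hS, hu]
      rw [hsplit y]
    by_cases hmem : y ∈ B
    · rw [Set.indicator_of_mem hmem, Set.indicator_of_mem (hTS.2 hmem)]
      simp only [hval]
    · rw [Set.indicator_of_notMem hmem, Set.indicator_of_notMem (fun h => hmem (hTS.1 h))]
  calc ∫⁻ y, B.indicator (fun y => ENNReal.ofReal (u y ^ (-p))) y
      = ∫⁻ y, F (ψ (φ y)) := lintegral_congr hcomp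
    _ = ∫⁻ q, F q := by
        have mp : MeasurePreserving (fun y : EuclideanSpace ℝ (Fin (m+1)) => ψ (φ y))
            volume volume :=
          (volume_preserving_piFinSuccAbove (fun _ : Fin (m+1) => ℝ) (Fin.last m)).comp
            (EuclideanSpace.volume_preserving_symm_measurableEquiv_toLp (Fin (m+1)))
        exact mp.lintegral_comp hFmeas
    _ = ∫⁻ w, ∫⁻ t, F (t, w) := by
        rw [Measure.volume_eq_prod, lintegral_prod_symm F hFmeas.aemeasurable]
    _ = ∫⁻ w, ENNReal.ofReal ((Real.sqrt (S w)) ^ (-p))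
          * ENNReal.ofReal (2 * min τ (R * S w)) := by
        refine lintegral_congr fun w => ?_
        have hset : {t : ℝ | (t, w) ∈ T}
            = Set.Ioo (-(min τ (R * S w))) (min τ (R * S w)) := by
          ext t
          simp only [hT, Set.mem_setOf_eq, Set.mem_Ioo, abs_lt, lt_min_iff, neg_lt]
          tauto
        have : ∀ t : ℝ, F (t, w) = (Set.Ioo (-(min τ (R * S w))) (min τ (R * S w))).indicator
            (fun _ => ENNReal.ofReal ((Real.sqrt (S w)) ^ (-p))) t := by
          intro t
          rw [hF, ← hset]
          rfl
        rw [lintegral_congr this, lintegral_indicator measurableSet_Ioo,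
          setLIntegral_const, Real.volume_Ioo]
        congr 1
        ring_nf
    _ = ∫⁻ v : EuclideanSpace ℝ (Fin m),
          ENNReal.ofReal (‖v‖ ^ (-p)) * ENNReal.ofReal (2 * min τ (R * ‖v‖^2)) := by
        have mp2 := EuclideanSpace.volume_preserving_symm_measurableEquiv_toLp (Fin m)
        have hGmeas : Measurable fun w : Fin m → ℝ =>
            ENNReal.ofReal ((Real.sqrt (S w)) ^ (-p)) * ENNReal.ofReal (2 * min τ (R * S w)) := by
          fun_prop
        rw [← mp2.lintegral_comp hGmeas]
        refine lintegral_congr fun v => ?_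
        have h1 : S ((MeasurableEquiv.toLp 2 (Fin m → ℝ)).symm v) = ‖v‖^2 := by
          rw [hS, norm_sq_eq v]
          rfl
        rw [h1, Real.sqrt_sq (norm_nonneg v)]
    _ < ⊤ := Lrad m hm p τ R hτ hR hp2 hpm hpm2

lemma side_bound {m : ℕ} (hm : 1 ≤ m) (p : ℝ) (hp2 : 2 < p) (hpm : (m:ℝ) < p)
    (hpm2 : p < (m:ℝ) + 2) (τ R : ℝ) (hτ : 0 < τ) (hR : 0 < R)
    (g : EuclideanSpace ℝ (Fin (m+1))) (hg : ‖g‖ = 1)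
    (A : Set (EuclideanSpace ℝ (Fin (m+1))))
    (hA : ∀ z ∈ A, |⟪g, z⟫| < τ ∧ |⟪g, z⟫| < R * (‖z‖^2 - ⟪g, z⟫^2)) :
    (∫ z in A, ‖z‖ ^ (-p)) ≤ ∫ y in {y : EuclideanSpace ℝ (Fin (m+1)) |
        |y (Fin.last m)| < τ ∧ |y (Fin.last m)| < R * (‖y‖^2 - (y (Fin.last m))^2)},
      ‖y‖ ^ (-p) := by
  set B : Set (EuclideanSpace ℝ (Fin (m+1))) :=
    {y | |y (Fin.last m)| < τ ∧ |y (Fin.last m)| < R * (‖y‖^2 - (y (Fin.last m))^2)} with hB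
  set en : EuclideanSpace ℝ (Fin (m+1)) := EuclideanSpace.single (Fin.last m) (1:ℝ) with hen
  have hennorm : ‖en‖ = 1 := by
    rw [hen, EuclideanSpace.norm_single, norm_one]
  set e : EuclideanSpace ℝ (Fin (m+1)) ≃ₗᵢ[ℝ] EuclideanSpace ℝ (Fin (m+1)) :=
    Submodule.reflection (ℝ ∙ (g - en))ᗮ with he
  have heg : e g = en := Submodule.reflection_sub (by rw [hg, hennorm])
  have hint : IntegrableOn (fun y : EuclideanSpace ℝ (Fin (m+1)) => ‖y‖ ^ (-p)) B := by
    constructor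
    · exact (Measurable.aestronglyMeasurable (by fun_prop)).restrict
    · rw [hasFiniteIntegral_iff_ofReal
        (Eventually.of_forall fun y => Real.rpow_nonneg (norm_nonneg y) _)]
      exact lintegral_cusp_lt_top m hm p τ R hτ hR hp2 hpm hpm2
  have himg : e '' A ⊆ B := by
    rintro y ⟨z, hz, rfl⟩
    obtain ⟨h1, h2⟩ := hA z hz
    have hcoord : (e z) (Fin.last m) = ⟪g, z⟫ := by
      have h3 : ⟪en, e z⟫ = ⟪g, z⟫ := by
        rw [← heg]; exact e.inner_map_map g z
      rw [← h3, hen, EuclideanSpace.inner_single_left]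
      simp
    have hnorm : ‖e z‖ = ‖z‖ := e.norm_map z
    exact ⟨by rw [hcoord]; exact h1, by rw [hcoord, hnorm]; exact h2⟩
  calc ∫ z in A, ‖z‖ ^ (-p)
      = ∫ z in A, ‖e z‖ ^ (-p) := by simp_rw [e.norm_map]
    _ = ∫ y in e '' A, ‖y‖ ^ (-p) :=
        (e.measurePreserving.setIntegral_image_emb
          e.toHomeomorph.measurableEmbedding (fun y => ‖y‖ ^ (-p)) A).symm
    _ ≤ ∫ y in B, ‖y‖ ^ (-p) :=
        setIntegral_mono_set hint
          (Eventually.of_forall fun y => Real.rpow_nonneg (norm_nonneg y) _)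
          (HasSubset.Subset.eventuallyLE himg)

end KernelAux

/-- **Lemma.** For `n ≥ 2` and `s ∈ (0,1/2)` there exist `τ₀, R > 0` such that for all
`0 < τ ≤ τ₀`, `0 ≤ σ < τ/2` and `x ∈ Q_ρ`, the kernel integrals over
`{z : d(x+z) > d(x)−σ, −τ < ∇d(x)·z < −2σ}` and
`{z : d(x+z) < d(x)+σ, 2σ < ∇d(x)·z < τ}` are bounded by
`∫_{{|y_n| < τ, |y_n| < R|y'|²}} |y|^{-(n+2s)} dy` (with `|y'|² = |y|² − y_n²`). -/
theorem kernel_integral_near_interface_bound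
    (n : ℕ) (hn : 2 ≤ n) (s : ℝ) (hs : s ∈ Set.Ioo (0 : ℝ) (1/2))
    (Ω : Set (EuclideanSpace ℝ (Fin n))) (hΩopen : IsOpen Ω) (hΩconn : IsConnected Ω)
    (d : EuclideanSpace ℝ (Fin n) → ℝ)
    (hd : ∀ x : EuclideanSpace ℝ (Fin n),
      (x ∈ Ω → d x = Metric.infDist x (frontier Ω)) ∧
      (x ∉ Ω → d x = -Metric.infDist x (frontier Ω)))
    (hdLip : LipschitzWith 1 d)
    (ρ : ℝ) (hρ : 0 < ρ)
    (hsmooth : ContDiffOn ℝ (⊤ : ℕ∞) d {x : EuclideanSpace ℝ (Fin n) | |d x| < 2 * ρ})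
    (hgrad : ∀ x ∈ {x : EuclideanSpace ℝ (Fin n) | |d x| < 2 * ρ}, ‖gradient d x‖ = 1)
    (C₀ : ℝ) (hC₀ : 0 < C₀)
    (hTaylor : ∀ x ∈ {x : EuclideanSpace ℝ (Fin n) | |d x| < ρ},
      ∀ z : EuclideanSpace ℝ (Fin n),
        |d (x + z) - d x - ⟪gradient d x, z⟫| ≤ C₀ * ‖z‖^2) :
    ∃ τ₀ : ℝ, 0 < τ₀ ∧ ∃ R : ℝ, 0 < R ∧
      ∀ τ σ : ℝ, 0 < τ → τ ≤ τ₀ → 0 ≤ σ → σ < τ/2 →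
      ∀ x ∈ {x : EuclideanSpace ℝ (Fin n) | |d x| < ρ},
        (∫ z in {z : EuclideanSpace ℝ (Fin n) |
            d x - σ < d (x + z) ∧ -τ < ⟪gradient d x, z⟫ ∧ ⟪gradient d x, z⟫ < -(2*σ)},
          ‖z‖ ^ (-((n : ℝ) + 2*s)))
          ≤ (∫ y in {y : EuclideanSpace ℝ (Fin n) |
              |y ⟨n - 1, by omega⟩| < τ ∧
              |y ⟨n - 1, by omega⟩| < R * (‖y‖^2 - (y ⟨n - 1, by omega⟩)^2)},
            ‖y‖ ^ (-((n : ℝ) + 2*s))) ∧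
        (∫ z in {z : EuclideanSpace ℝ (Fin n) |
            d (x + z) < d x + σ ∧ 2*σ < ⟪gradient d x, z⟫ ∧ ⟪gradient d x, z⟫ < τ},
          ‖z‖ ^ (-((n : ℝ) + 2*s)))
          ≤ (∫ y in {y : EuclideanSpace ℝ (Fin n) |
              |y ⟨n - 1, by omega⟩| < τ ∧
              |y ⟨n - 1, by omega⟩| < R * (‖y‖^2 - (y ⟨n - 1, by omega⟩)^2)},
            ‖y‖ ^ (-((n : ℝ) + 2*s))) := by
  obtain ⟨m, rfl⟩ : ∃ m, n = m + 1 := ⟨n - 1, by omega⟩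
  have hm : 1 ≤ m := by omega
  obtain ⟨hs0, hs12⟩ := hs
  refine ⟨1/(4*C₀), by positivity, 4*C₀, by positivity, ?_⟩
  intro τ σ hτ hττ₀ hσ hστ x hx
  set p : ℝ := ((m+1 : ℕ) : ℝ) + 2*s with hp
  have hp2 : 2 < p := by
    have h1 : (2:ℝ) ≤ ((m+1 : ℕ) : ℝ) := by exact_mod_cast Nat.succ_le_succ hm
    rw [hp]; linarith
  have hpm : (m:ℝ) < p := by
    have : ((m+1:ℕ):ℝ) = (m:ℝ) + 1 := by push_cast; ring
    rw [hp, this]; linarith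
  have hpm2 : p < (m:ℝ) + 2 := by
    have : ((m+1:ℕ):ℝ) = (m:ℝ) + 1 := by push_cast; ring
    rw [hp, this]; linarith
  set g := gradient d x with hgdef
  have hg : ‖g‖ = 1 := hgrad x (by
    simp only [Set.mem_setOf_eq] at hx ⊢
    linarith)
  have hRpos : (0:ℝ) < 4*C₀ := by positivity
  -- the key geometric estimate
  have hgeom : ∀ z : EuclideanSpace ℝ (Fin (m+1)), |⟪g, z⟫| < τ →
      |⟪g, z⟫| < 2*C₀*‖z‖^2 →
      |⟪g, z⟫| < τ ∧ |⟪g, z⟫| < 4*C₀ * (‖z‖^2 - ⟪g, z⟫^2) := by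
    intro z h1 h2
    refine ⟨h1, ?_⟩
    set t := ⟪g, z⟫
    have hsq : t^2 ≤ τ * |t| := by nlinarith [sq_abs t, abs_nonneg t]
    have hττ : 2*C₀*τ ≤ 1/2 := by
      rw [le_div_iff₀ (by positivity : (0:ℝ) < 4*C₀)] at hττ₀
      nlinarith
    have key : 2*C₀*t^2 ≤ |t|/2 := by nlinarith [abs_nonneg t]
    nlinarith [abs_nonneg t]
  constructor
  · refine KernelAux.side_bound hm p hp2 hpm hpm2 τ (4*C₀) hτ hRpos g hg _ ?_
    rintro z ⟨hz1, hz2, hz3⟩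
    set t := ⟪g, z⟫ with htdef
    have ht0 : t < 0 := by linarith
    have h1 : |t| < τ := abs_lt.2 ⟨hz2, by linarith⟩
    refine hgeom z h1 ?_
    have hT := hTaylor x hx z
    rw [← hgdef, ← htdef] at hT
    have hT1 := (abs_le.1 hT).2
    rw [abs_of_neg ht0]
    linarith
  · refine KernelAux.side_bound hm p hp2 hpm hpm2 τ (4*C₀) hτ hRpos g hg _ ?_
    rintro z ⟨hz1, hz2, hz3⟩
    set t := ⟪g, z⟫ with htdef
    have ht0 : 0 < t := by linarith
    have h1 : |t| < τ := abs_lt.2 ⟨by linarith, hz3⟩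
    refine hgeom z h1 ?_
    have hT := hTaylor x hx z
    rw [← hgdef, ← htdef] at hT
    have hT1 := (abs_le.1 hT).1
    rw [abs_of_pos ht0]
    linarith
end

section
/- Let s ∈ (1/2,1) and let φ : ℝ → (0,1) be a C² function satisfying, for some C₀ > 0: |φ̈(ξ)| ≤ C₀(1+|ξ|)^{-(2s+1)} for all ξ ∈ ℝ, and |φ(ξ) − H(ξ)| ≤ C₀|ξ|^{-2s} for |ξ| ≥ 1, where H is the Heaviside function. Then there is a constant C > 0 such that: (i) ∫_ℝ φ(ξ) ∫_ℝ |φ(ξ+w) + φ(ξ−w) − 2φ(ξ)| · |w|^{-(1+2s)} dw dξ ≤ C; and (ii) for every M > 1, ∫_ℝ φ(ξ) ∫_{{|w|>M}} |φ(ξ+w) + φ(ξ−w) − 2φ(ξ)| · |w|^{-(1+2s)} dw dξ ≤ C M^{-(2s-1)}. -/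
open MeasureTheory Real Set Filter

section helpers

-- helper 1: even integrability
lemma my_integrable_comp_abs {F : ℝ → ℝ} (hF : IntegrableOn F (Ioi 0)) :
    Integrable (fun x : ℝ => F |x|) := by
  have h1 : IntegrableOn (fun x : ℝ => F |x|) (Ioi 0) :=
    hF.congr_fun (fun x hx => by rw [abs_of_pos hx]) measurableSet_Ioi
  have h2 : IntegrableOn (fun x : ℝ => F |x|) (Iic 0) := by
    rw [← Measure.map_neg_eq_self (volume : Measure ℝ)]
    have m : MeasurableEmbedding fun x : ℝ => -x := (Homeomorph.neg ℝ).measurableEmbedding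
    rw [m.integrableOn_map_iff]
    simp_rw [Function.comp_def, abs_neg, neg_preimage, neg_Iic, neg_zero]
    exact (integrableOn_Ici_iff_integrableOn_Ioi).mpr h1
  have := h2.union h1
  rw [Iic_union_Ioi] at this
  rwa [← integrableOn_univ]

-- helper 2: piecewise on Ioi 0
lemma my_piecewise_int {R : ℝ} (hR : 0 < R) {f g : ℝ → ℝ}
    (hf : IntegrableOn f (Ioc 0 R)) (hg : IntegrableOn g (Ioi R)) :
    IntegrableOn (fun x => if x ≤ R then f x else g x) (Ioi 0) ∧
    ∫ x in Ioi (0:ℝ), (if x ≤ R then f x else g x) =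
      (∫ x in Ioc (0:ℝ) R, f x) + ∫ x in Ioi R, g x := by
  have hu : Ioc (0:ℝ) R ∪ Ioi R = Ioi 0 := Ioc_union_Ioi_eq_Ioi hR.le
  have hdis : Disjoint (Ioc (0:ℝ) R) (Ioi R) := by
    simp only [Set.disjoint_left, mem_Ioc, mem_Ioi, not_lt]
    exact fun a ha => ha.2
  have e1 : EqOn (fun x => if x ≤ R then f x else g x) f (Ioc 0 R) := by
    intro x hx; simp [hx.2]
  have e2 : EqOn (fun x => if x ≤ R then f x else g x) g (Ioi R) := by
    intro x hx; simp [not_le.mpr (mem_Ioi.mp hx)]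
  have i1 : IntegrableOn (fun x => if x ≤ R then f x else g x) (Ioc 0 R) :=
    hf.congr_fun (fun x hx => (e1 hx).symm) measurableSet_Ioc
  have i2 : IntegrableOn (fun x => if x ≤ R then f x else g x) (Ioi R) :=
    hg.congr_fun (fun x hx => (e2 hx).symm) measurableSet_Ioi
  constructor
  · rw [← hu]; exact i1.union i2
  · rw [← hu, setIntegral_union hdis measurableSet_Ioi i1 i2,
      setIntegral_congr_fun measurableSet_Ioc e1, setIntegral_congr_fun measurableSet_Ioi e2]

-- tail of x^a
lemma my_tail {a R : ℝ} (ha : a < -1) (hR : 0 < R) :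
    IntegrableOn (fun x : ℝ => x ^ a) (Ioi R) ∧
    ∫ x in Ioi R, x ^ a = R^(a+1)/(-(a+1)) := by
  refine ⟨integrableOn_Ioi_rpow_of_lt ha hR, ?_⟩
  rw [integral_Ioi_rpow_of_lt ha hR]
  rw [div_eq_div_iff (by linarith) (by linarith)]
  ring

-- (1+x)^a facts
lemma my_oneplus_tail {a K : ℝ} (ha : a < -1) (hK : 0 < K) :
    IntegrableOn (fun x : ℝ => (1+x) ^ a) (Ioi K) ∧
    ∫ x in Ioi K, (1+x) ^ a ≤ K^(a+1)/(-(a+1)) := by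
  obtain ⟨hint, hval⟩ := my_tail ha hK
  have hpt : ∀ x ∈ Ioi K, (1+x) ^ a ≤ x ^ a := by
    intro x hx
    have hx0 : (0:ℝ) < x := hK.trans hx
    exact Real.rpow_le_rpow_of_nonpos hx0 (by linarith) (by linarith)
  have hcont : ContinuousOn (fun x : ℝ => (1+x) ^ a) (Ioi K) := by
    apply ContinuousOn.rpow_const (by fun_prop)
    intro x hx
    exact Or.inl (by have : (0:ℝ) < x := hK.trans hx; positivity)
  have hint2 : IntegrableOn (fun x : ℝ => (1+x) ^ a) (Ioi K) := by
    refine Integrable.mono hint (hcont.aestronglyMeasurable measurableSet_Ioi) ?_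
    refine (ae_restrict_iff' measurableSet_Ioi).mpr (ae_of_all _ fun x hx => ?_)
    have hx0 : (0:ℝ) < x := hK.trans hx
    rw [Real.norm_eq_abs, Real.norm_eq_abs, abs_of_nonneg (Real.rpow_nonneg (by linarith) _),
      abs_of_nonneg (Real.rpow_nonneg hx0.le _)]
    exact hpt x hx
  refine ⟨hint2, ?_⟩
  calc ∫ x in Ioi K, (1+x) ^ a ≤ ∫ x in Ioi K, x ^ a :=
        setIntegral_mono_on hint2 hint measurableSet_Ioi hpt
    _ = K^(a+1)/(-(a+1)) := hval

lemma my_oneplus_full {a : ℝ} (ha : a < -1) :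
    IntegrableOn (fun x : ℝ => (1+x) ^ a) (Ioi 0) ∧
    ∫ x in Ioi (0:ℝ), (1+x) ^ a ≤ 1 + 1/(-(a+1)) := by
  obtain ⟨hint1, hval1⟩ := my_oneplus_tail ha one_pos
  have hcont : ContinuousOn (fun x : ℝ => (1+x) ^ a) (Icc 0 1) := by
    apply ContinuousOn.rpow_const (by fun_prop)
    intro x hx
    exact Or.inl (by have := hx.1; positivity)
  have hint0 : IntegrableOn (fun x : ℝ => (1+x) ^ a) (Ioc 0 1) :=
    hcont.integrableOn_Icc.mono_set Ioc_subset_Icc_self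
  have hu : Ioc (0:ℝ) 1 ∪ Ioi 1 = Ioi 0 := Ioc_union_Ioi_eq_Ioi zero_le_one
  have hdis : Disjoint (Ioc (0:ℝ) 1) (Ioi 1) := by
    simp only [Set.disjoint_left, mem_Ioc, mem_Ioi, not_lt]
    exact fun x hx => hx.2
  constructor
  · rw [← hu]; exact hint0.union hint1
  · rw [← hu, setIntegral_union hdis measurableSet_Ioi hint0 hint1]
    have h1 : ∫ x in Ioc (0:ℝ) 1, (1+x) ^ a ≤ 1 := by
      have : ∫ x in Ioc (0:ℝ) 1, (1+x) ^ a ≤ ∫ _ in Ioc (0:ℝ) 1, (1:ℝ) := by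
        refine setIntegral_mono_on hint0 ((integrableOn_const_iff).mpr (Or.inr ?_)) measurableSet_Ioc ?_
        · exact measure_Ioc_lt_top
        · intro x hx
          exact Real.rpow_le_one_of_one_le_of_nonpos (by linarith [hx.1]) (by linarith)
      simpa using this
    have h2 : ∫ x in Ioi (1:ℝ), (1+x) ^ a ≤ 1/(-(a+1)) := by
      simpa using hval1
    linarith

lemma my_head {b R : ℝ} (hb : -1 < b) (hR : 0 < R) :
    IntegrableOn (fun x : ℝ => x ^ b) (Ioc 0 R) ∧
    ∫ x in Ioc (0:ℝ) R, x ^ b = R^(b+1)/(b+1) := by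
  have h1 : IntervalIntegrable (fun x : ℝ => x ^ b) volume 0 R :=
    intervalIntegral.intervalIntegrable_rpow' hb
  constructor
  · exact (intervalIntegrable_iff_integrableOn_Ioc_of_le hR.le).mp h1
  · rw [← intervalIntegral.integral_of_le hR.le, integral_rpow (Or.inl hb),
      Real.zero_rpow (by linarith)]
    ring

lemma my_secondDiff {s C₀ : ℝ} (hs : s ∈ Set.Ioo (1/2:ℝ) 1) {φ : ℝ → ℝ}
    (hφreg : ContDiff ℝ 2 φ) (hC₀ : 0 < C₀)
    (hdder : ∀ ξ : ℝ, |deriv (deriv φ) ξ| ≤ C₀ / (1 + |ξ|) ^ (2*s + 1))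
    (ξ w : ℝ) (hw : |w| ≤ (1+|ξ|)/2) :
    |φ (ξ + w) + φ (ξ - w) - 2 * φ ξ| ≤ 16*C₀ * w^2 / (1+|ξ|)^(2*s+1) := by
  have hbase : (0:ℝ) < 1 + |ξ| := by positivity
  have hφdiff : Differentiable ℝ φ := hφreg.differentiable (by norm_num)
  have hφ11 : ContDiff ℝ (1+1) φ := by exact_mod_cast hφreg
  have hdφ : Differentiable ℝ (deriv φ) :=
    ((contDiff_succ_iff_deriv.mp hφ11).2.2).differentiable one_ne_zero
  set B : ℝ := 8*C₀ / (1+|ξ|)^(2*s+1) with hB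
  -- bound on second derivative near ξ
  have hd2 : ∀ x ∈ Icc (ξ - |w|) (ξ + |w|), ‖deriv (deriv φ) x‖ ≤ B := by
    intro x hx
    have hxx : |ξ| - |w| ≤ |x| := by
      have h1 : |ξ| - |x| ≤ |ξ - x| := abs_sub_abs_le_abs_sub ξ x
      have h2 : |ξ - x| ≤ |w| := abs_le.mpr ⟨by linarith [hx.2], by linarith [hx.1]⟩
      linarith
    have hlow : (1+|ξ|)/2 ≤ 1 + |x| := by linarith
    have h8 : (2:ℝ)^(2*s+1) ≤ 8 := by
      rw [show (8:ℝ) = 2^(3:ℝ) by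
        rw [show (3:ℝ) = ((3:ℕ):ℝ) by norm_num, Real.rpow_natCast]; norm_num]
      exact Real.rpow_le_rpow_of_exponent_le one_le_two (by linarith [hs.2])
    calc ‖deriv (deriv φ) x‖ ≤ C₀ / (1+|x|)^(2*s+1) := hdder x
      _ ≤ C₀ / ((1+|ξ|)/2)^(2*s+1) := by
          apply div_le_div_of_nonneg_left hC₀.le (by positivity)
          exact Real.rpow_le_rpow (by positivity) hlow (by linarith [hs.1])
      _ = C₀ * 2^(2*s+1) / (1+|ξ|)^(2*s+1) := by
          rw [Real.div_rpow (by positivity) (by norm_num)]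
          field_simp
      _ ≤ B := by
          rw [hB, div_le_div_iff_of_pos_right (by positivity)]
          nlinarith
  have hBpos : 0 < B := by positivity
  -- the symmetrized function
  set g : ℝ → ℝ := fun t => φ (ξ + t) + φ (ξ - t) with hg
  set g' : ℝ → ℝ := fun t => deriv φ (ξ + t) - deriv φ (ξ - t) with hg'
  have hgd : ∀ t : ℝ, HasDerivAt g (g' t) t := by
    intro t
    have h1 : HasDerivAt (fun t : ℝ => ξ + t) 1 t := by
      simpa using (hasDerivAt_id t).const_add ξ
    have h2 : HasDerivAt (fun t : ℝ => ξ - t) (-1) t := by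
      simpa using (hasDerivAt_id t).const_sub ξ
    have h3 := ((hφdiff (ξ + t)).hasDerivAt).comp t h1
    have h4 := ((hφdiff (ξ - t)).hasDerivAt).comp t h2
    exact (h3.add h4).congr_deriv (by
      show deriv φ (ξ + t) * 1 + deriv φ (ξ - t) * -1 = deriv φ (ξ + t) - deriv φ (ξ - t)
      ring)
  -- bound on g'
  have hgb : ∀ t ∈ Icc (-|w|) |w|, ‖g' t‖ ≤ 2 * B * |w| := by
    intro t ht
    have hmem1 : ξ + t ∈ Icc (ξ - |w|) (ξ + |w|) :=
      ⟨by linarith [ht.1], by linarith [ht.2]⟩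
    have hmem2 : ξ - t ∈ Icc (ξ - |w|) (ξ + |w|) :=
      ⟨by linarith [ht.2], by linarith [ht.1]⟩
    have := Convex.norm_image_sub_le_of_norm_deriv_le
      (f := deriv φ) (fun x _ => hdφ x) hd2 (convex_Icc _ _) hmem2 hmem1
    have habs : ‖(ξ + t) - (ξ - t)‖ = 2 * |t| := by
      rw [Real.norm_eq_abs]
      rw [show (ξ + t) - (ξ - t) = 2*t by ring, abs_mul]
      norm_num
    rw [habs] at this
    calc ‖g' t‖ ≤ B * (2 * |t|) := this
      _ ≤ 2 * B * |w| := by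
          have h1 : |t| ≤ |w| := abs_le.mpr ⟨ht.1, ht.2⟩
          nlinarith [abs_nonneg t]
  -- MVT for g on [-|w|, |w|]
  have h0mem : (0:ℝ) ∈ Icc (-|w|) |w| := ⟨by simp [abs_nonneg w], abs_nonneg w⟩
  have hwmem : w ∈ Icc (-|w|) |w| := ⟨neg_abs_le w, le_abs_self w⟩
  have hfinal := Convex.norm_image_sub_le_of_norm_hasDerivWithin_le
    (f := g) (f' := g') (fun x _ => (hgd x).hasDerivWithinAt) hgb (convex_Icc _ _) h0mem hwmem
  have hg0 : g 0 = 2 * φ ξ := by simp [hg]; ring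
  rw [hg0, sub_zero, Real.norm_eq_abs, Real.norm_eq_abs] at hfinal
  have : |φ (ξ + w) + φ (ξ - w) - 2 * φ ξ| ≤ 2 * B * |w| * |w| := hfinal
  calc |φ (ξ + w) + φ (ξ - w) - 2 * φ ξ| ≤ 2 * B * |w| * |w| := this
    _ = 2 * B * w^2 := by rw [mul_assoc, ← abs_mul, ← sq, abs_of_nonneg (sq_nonneg w)]
    _ = 16*C₀ * w^2 / (1+|ξ|)^(2*s+1) := by rw [hB]; ring

end helpers

set_option maxHeartbeats 1000000 in
/-- **Second-difference estimates for the phase transition (s ∈ (1/2,1)).** If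
`φ : ℝ → (0,1)` is C² with `|φ̈(ξ)| ≤ C₀(1+|ξ|)^{-(2s+1)}` for all `ξ` and
`|φ(ξ) − H(ξ)| ≤ C₀|ξ|^{-2s}` for `|ξ| ≥ 1`, then there is `C > 0` such that
(i) `∫_ℝ φ(ξ) ∫_ℝ |φ(ξ+w)+φ(ξ−w)−2φ(ξ)|·|w|^{-(1+2s)} dw dξ ≤ C`, and
(ii) for every `M > 1`,
`∫_ℝ φ(ξ) ∫_{|w|>M} |φ(ξ+w)+φ(ξ−w)−2φ(ξ)|·|w|^{-(1+2s)} dw dξ ≤ C M^{-(2s-1)}`. -/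
theorem second_difference_estimates
    (s : ℝ) (hs : s ∈ Set.Ioo (1/2 : ℝ) 1)
    (φ : ℝ → ℝ) (hφmem : ∀ ξ : ℝ, φ ξ ∈ Set.Ioo (0 : ℝ) 1) (hφreg : ContDiff ℝ 2 φ)
    (C₀ : ℝ) (hC₀ : 0 < C₀)
    (hdder : ∀ ξ : ℝ, |deriv (deriv φ) ξ| ≤ C₀ / (1 + |ξ|) ^ (2*s + 1))
    (hasym : ∀ ξ : ℝ, 1 ≤ |ξ| →
      |φ ξ - (if ξ < 0 then (0:ℝ) else 1)| ≤ C₀ / |ξ| ^ (2*s)) :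
    ∃ C : ℝ, 0 < C ∧
      (∫ ξ : ℝ, φ ξ * ∫ w : ℝ,
          |φ (ξ + w) + φ (ξ - w) - 2 * φ ξ| / |w| ^ (1 + 2*s)) ≤ C ∧
      (∀ M : ℝ, 1 < M →
        (∫ ξ : ℝ, φ ξ * ∫ w in {w : ℝ | M < |w|},
            |φ (ξ + w) + φ (ξ - w) - 2 * φ ξ| / |w| ^ (1 + 2*s))
          ≤ C * M ^ (-(2*s - 1))) := by
  obtain ⟨hs1, hs2⟩ := hs
  have h2s1 : 0 < 2*s - 1 := by linarith
  have hspos : 0 < s := by linarith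
  set A : ℝ := 32*C₀/(2-2*s) + 16/s with hA
  have hApos : 0 < A := by
    have t1 : 0 < 32*C₀/(2-2*s) := div_pos (by linarith) (by linarith)
    have t2 : 0 < 16/s := by positivity
    rw [hA]; linarith
  -- numerator bounded by 4
  have hnum4 : ∀ ξ w : ℝ, |φ (ξ + w) + φ (ξ - w) - 2 * φ ξ| ≤ 4 := by
    intro ξ w
    obtain ⟨a1, a2⟩ := hφmem (ξ + w)
    obtain ⟨b1, b2⟩ := hφmem (ξ - w)
    obtain ⟨c1, c2⟩ := hφmem ξ
    rw [abs_le]; constructor <;> nlinarith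
  -- tail pointwise bound
  have htailpt : ∀ ξ w : ℝ, |φ (ξ + w) + φ (ξ - w) - 2 * φ ξ| / |w| ^ (1 + 2*s)
      ≤ 4 * |w| ^ (-(1 + 2*s)) := by
    intro ξ w
    rcases eq_or_ne w 0 with rfl | hw0
    · have e1 : |(0:ℝ)| ^ (1+2*s) = 0 := by
        rw [abs_zero, Real.zero_rpow (by positivity : (0:ℝ) < 1+2*s).ne']
      have e2 : |(0:ℝ)| ^ (-(1+2*s)) = 0 := by
        rw [abs_zero, Real.zero_rpow (neg_ne_zero.mpr (by positivity : (0:ℝ) < 1+2*s).ne')]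
      rw [e1, e2, div_zero, mul_zero]
    · have hvpos : 0 < |w| ^ (1+2*s) := Real.rpow_pos_of_pos (abs_pos.mpr hw0) _
      rw [Real.rpow_neg (abs_nonneg w), ← div_eq_mul_inv]
      exact (div_le_div_iff_of_pos_right hvpos).mpr (hnum4 ξ w)
  -- head pointwise bound
  have hheadpt : ∀ ξ w : ℝ, |w| ≤ (1+|ξ|)/2 →
      |φ (ξ + w) + φ (ξ - w) - 2 * φ ξ| / |w| ^ (1 + 2*s)
        ≤ (16*C₀/(1+|ξ|)^(2*s+1)) * |w| ^ (1 - 2*s) := by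
    intro ξ w hw
    rcases eq_or_ne w 0 with rfl | hw0
    · rw [abs_zero, Real.zero_rpow (by positivity : (0:ℝ) < 1+2*s).ne', div_zero,
        Real.zero_rpow (by linarith : 1-2*s < 0).ne, mul_zero]
    · have h2 := my_secondDiff ⟨hs1, hs2⟩ hφreg hC₀ hdder ξ w hw
      have hwpos : 0 < |w| := abs_pos.mpr hw0
      have hvpos : 0 < |w| ^ (1+2*s) := Real.rpow_pos_of_pos hwpos _
      have step1 : |φ (ξ + w) + φ (ξ - w) - 2 * φ ξ| / |w| ^ (1 + 2*s)
          ≤ (16*C₀ * w^2 / (1+|ξ|)^(2*s+1)) / |w| ^ (1+2*s) :=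
        (div_le_div_iff_of_pos_right hvpos).mpr h2
      refine step1.trans (le_of_eq ?_)
      have habs : w^2 = |w| ^ ((2:ℕ):ℝ) := by rw [Real.rpow_natCast, sq_abs]
      have hq : |w| ^ (((2:ℕ):ℝ)) / |w| ^ (1+2*s) = |w| ^ (1-2*s) := by
        rw [← Real.rpow_sub hwpos, show ((2:ℕ):ℝ)-(1+2*s) = 1-2*s by push_cast; ring]
      calc 16*C₀ * w^2 / (1+|ξ|)^(2*s+1) / |w| ^ (1+2*s)
          = (16*C₀/(1+|ξ|)^(2*s+1)) * (|w| ^ (((2:ℕ):ℝ)) / |w| ^ (1+2*s)) := by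
            rw [← habs]; ring
        _ = (16*C₀/(1+|ξ|)^(2*s+1)) * |w| ^ (1-2*s) := by rw [hq]
  -- inner majorant: integrable + integral bound
  have hinnerfacts : ∀ ξ : ℝ,
      Integrable (fun w : ℝ => if |w| ≤ (1+|ξ|)/2
        then (16*C₀/(1+|ξ|)^(2*s+1)) * |w| ^ (1-2*s) else 4 * |w| ^ (-(1+2*s))) ∧
      (∫ w : ℝ, (if |w| ≤ (1+|ξ|)/2
        then (16*C₀/(1+|ξ|)^(2*s+1)) * |w| ^ (1-2*s) else 4 * |w| ^ (-(1+2*s))))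
        ≤ A * (1+|ξ|)^(-(2*s)) := by
    intro ξ
    have hbase : (0:ℝ) < 1 + |ξ| := by positivity
    set R : ℝ := (1+|ξ|)/2 with hRdef
    have hR : 0 < R := by rw [hRdef]; linarith
    set c₁ : ℝ := 16*C₀/(1+|ξ|)^(2*s+1) with hc₁def
    have hc₁ : 0 ≤ c₁ := by positivity
    obtain ⟨ih1, iv1⟩ := my_head (b := 1-2*s) (by linarith) hR
    obtain ⟨ih2, iv2⟩ := my_tail (a := -(1+2*s)) (by linarith) hR
    have hf1 : IntegrableOn (fun x : ℝ => c₁ * x ^ (1-2*s)) (Ioc 0 R) := ih1.const_mul c₁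
    have hf2 : IntegrableOn (fun x : ℝ => 4 * x ^ (-(1+2*s))) (Ioi R) := ih2.const_mul 4
    obtain ⟨jint, jval⟩ := my_piecewise_int hR hf1 hf2
    constructor
    · exact my_integrable_comp_abs jint
    · have e0 : (∫ w : ℝ, (if |w| ≤ R then c₁ * |w| ^ (1-2*s) else 4 * |w| ^ (-(1+2*s))))
          = 2 * ∫ x in Ioi (0:ℝ), (if x ≤ R then c₁ * x ^ (1-2*s) else 4 * x ^ (-(1+2*s))) :=
        integral_comp_abs (f := fun x => if x ≤ R then c₁ * x ^ (1-2*s) else 4 * x ^ (-(1+2*s)))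
      rw [e0, jval]
      have v1 : ∫ x in Ioc (0:ℝ) R, c₁ * x ^ (1-2*s) = c₁ * (R^(2-2*s)/(2-2*s)) := by
        rw [MeasureTheory.integral_const_mul, iv1, show (1-2*s+1:ℝ) = 2-2*s by ring]
      have v2 : ∫ x in Ioi R, 4 * x ^ (-(1+2*s)) = 4 * (R^(-(2*s))/(2*s)) := by
        rw [MeasureTheory.integral_const_mul, iv2, show (-(1+2*s)+1:ℝ) = -(2*s) by ring,
          show (-(-(2*s)):ℝ) = 2*s by ring]
      rw [v1, v2]
      set u : ℝ := (1+|ξ|)^(-(2*s)) with hu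
      have hupos : 0 < u := by rw [hu]; positivity
      have e2 : c₁ * R^(2-2*s) ≤ 16*C₀ * u := by
        have r1 : R^(2-2*s) ≤ (1+|ξ|)^(2-2*s) :=
          Real.rpow_le_rpow hR.le (by rw [hRdef]; linarith) (by linarith)
        have r2 : c₁ * (1+|ξ|)^(2-2*s) = 16*C₀ * (1+|ξ|)^(1-4*s) := by
          rw [hc₁def, div_mul_eq_mul_div, mul_div_assoc, ← Real.rpow_sub hbase,
            show (2-2*s-(2*s+1):ℝ) = 1-4*s by ring]
        have r3 : (1+|ξ|)^(1-4*s) ≤ u := by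
          rw [hu]
          exact Real.rpow_le_rpow_of_exponent_le (by linarith [abs_nonneg ξ]) (by linarith)
        calc c₁ * R^(2-2*s) ≤ c₁ * (1+|ξ|)^(2-2*s) := mul_le_mul_of_nonneg_left r1 hc₁
          _ = 16*C₀ * (1+|ξ|)^(1-4*s) := r2
          _ ≤ 16*C₀ * u := mul_le_mul_of_nonneg_left r3 (by positivity)
      have e3 : R^(-(2*s)) ≤ 4 * u := by
        have h2inv : ((2:ℝ)⁻¹)^(-(2*s)) = 2^(2*s) := by
          rw [Real.inv_rpow (by norm_num : (0:ℝ) ≤ 2),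
            ← Real.rpow_neg (by norm_num : (0:ℝ) ≤ 2), neg_neg]
        have q1 : R^(-(2*s)) = u * 2^(2*s) := by
          rw [hRdef, hu, div_eq_mul_inv, Real.mul_rpow hbase.le (by norm_num), h2inv]
        have q2 : (2:ℝ)^(2*s) ≤ 4 := by
          rw [show (4:ℝ) = 2^((2:ℕ):ℝ) by rw [Real.rpow_natCast]; norm_num]
          exact Real.rpow_le_rpow_of_exponent_le one_le_two (by push_cast; linarith)
        rw [q1]; nlinarith
      have d1 : (0:ℝ) < 2-2*s := by linarith
      calc 2*(c₁ * (R^(2-2*s)/(2-2*s)) + 4 * (R^(-(2*s))/(2*s)))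
          ≤ 2*((16*C₀*u)/(2-2*s) + 4*((4*u)/(2*s))) := by
            have g1 : c₁ * (R^(2-2*s)/(2-2*s)) ≤ (16*C₀*u)/(2-2*s) := by
              rw [mul_div_assoc']
              exact (div_le_div_iff_of_pos_right d1).mpr e2
            have g2 : R^(-(2*s))/(2*s) ≤ (4*u)/(2*s) :=
              (div_le_div_iff_of_pos_right (by linarith)).mpr e3
            linarith
        _ = A * u := by rw [hA]; field_simp; ring
  -- pointwise domination by the majorant
  have hptall : ∀ ξ w : ℝ, |φ (ξ + w) + φ (ξ - w) - 2 * φ ξ| / |w| ^ (1 + 2*s)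
      ≤ (if |w| ≤ (1+|ξ|)/2
        then (16*C₀/(1+|ξ|)^(2*s+1)) * |w| ^ (1-2*s) else 4 * |w| ^ (-(1+2*s))) := by
    intro ξ w
    by_cases h : |w| ≤ (1+|ξ|)/2
    · rw [if_pos h]; exact hheadpt ξ w h
    · rw [if_neg h]; exact htailpt ξ w
  have hmaj_nonneg : ∀ ξ w : ℝ, 0 ≤ (if |w| ≤ (1+|ξ|)/2
      then (16*C₀/(1+|ξ|)^(2*s+1)) * |w| ^ (1-2*s) else 4 * |w| ^ (-(1+2*s))) := by
    intro ξ w; split <;> positivity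
  have hfnonneg : ∀ ξ w : ℝ, 0 ≤ |φ (ξ + w) + φ (ξ - w) - 2 * φ ξ| / |w| ^ (1 + 2*s) :=
    fun ξ w => div_nonneg (abs_nonneg _) (Real.rpow_nonneg (abs_nonneg _) _)
  -- inner integral bounds
  have hinner_full : ∀ ξ : ℝ, (∫ w : ℝ, |φ (ξ + w) + φ (ξ - w) - 2 * φ ξ| / |w| ^ (1 + 2*s))
      ≤ A * (1+|ξ|)^(-(2*s)) := fun ξ =>
    (integral_mono_of_nonneg (ae_of_all _ (hfnonneg ξ)) (hinnerfacts ξ).1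
      (ae_of_all _ (hptall ξ))).trans (hinnerfacts ξ).2
  have hinner_set1 : ∀ (ξ : ℝ) (S : Set ℝ),
      (∫ w in S, |φ (ξ + w) + φ (ξ - w) - 2 * φ ξ| / |w| ^ (1 + 2*s))
        ≤ A * (1+|ξ|)^(-(2*s)) := by
    intro ξ S
    have st1 := integral_mono_of_nonneg (μ := volume.restrict S) (ae_of_all _ (hfnonneg ξ))
      ((hinnerfacts ξ).1.integrableOn) (ae_of_all _ (hptall ξ))
    have st2 := setIntegral_le_integral (s := S) (hinnerfacts ξ).1 (ae_of_all _ (hmaj_nonneg ξ))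
    exact st1.trans (st2.trans (hinnerfacts ξ).2)
  have hSmeas : ∀ M : ℝ, MeasurableSet {w : ℝ | M < |w|} := fun M =>
    (isOpen_lt continuous_const continuous_abs).measurableSet
  have hinner_set2 : ∀ (ξ M : ℝ), 1 < M →
      (∫ w in {w : ℝ | M < |w|}, |φ (ξ + w) + φ (ξ - w) - 2 * φ ξ| / |w| ^ (1 + 2*s))
        ≤ (4/s) * M^(-(2*s)) := by
    intro ξ M hM
    have hM0 : (0:ℝ) < M := by linarith
    have hzero : IntegrableOn (fun _ : ℝ => (0:ℝ)) (Ioc 0 M) := integrableOn_zero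
    obtain ⟨ih2, iv2⟩ := my_tail (a := -(1+2*s)) (by linarith) hM0
    have hf2 : IntegrableOn (fun x : ℝ => 4 * x ^ (-(1+2*s))) (Ioi M) := ih2.const_mul 4
    obtain ⟨jint, jval⟩ := my_piecewise_int hM0 hzero hf2
    have hmMint : Integrable (fun w : ℝ => if |w| ≤ M then (0:ℝ) else 4 * |w| ^ (-(1+2*s))) :=
      my_integrable_comp_abs jint
    have hmMnn : ∀ w : ℝ, 0 ≤ (if |w| ≤ M then (0:ℝ) else 4 * |w| ^ (-(1+2*s))) := by
      intro w; split <;> positivity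
    have hptS : ∀ w ∈ {w : ℝ | M < |w|},
        |φ (ξ + w) + φ (ξ - w) - 2 * φ ξ| / |w| ^ (1 + 2*s)
          ≤ (if |w| ≤ M then (0:ℝ) else 4 * |w| ^ (-(1+2*s))) := by
      intro w hw
      rw [if_neg (not_le.mpr hw)]
      exact htailpt ξ w
    have step1 := integral_mono_of_nonneg (μ := volume.restrict {w : ℝ | M < |w|})
      (ae_of_all _ (hfnonneg ξ)) (hmMint.integrableOn)
      ((ae_restrict_iff' (hSmeas M)).mpr (ae_of_all _ hptS))
    have step2 := setIntegral_le_integral (s := {w : ℝ | M < |w|}) hmMint (ae_of_all _ hmMnn)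
    have step3 : (∫ w : ℝ, (if |w| ≤ M then (0:ℝ) else 4 * |w| ^ (-(1+2*s))))
        = (4/s) * M^(-(2*s)) := by
      have e0 : (∫ w : ℝ, (if |w| ≤ M then (0:ℝ) else 4 * |w| ^ (-(1+2*s))))
          = 2 * ∫ x in Ioi (0:ℝ), (if x ≤ M then (0:ℝ) else 4 * x ^ (-(1+2*s))) :=
        integral_comp_abs (f := fun x => if x ≤ M then (0:ℝ) else 4 * x ^ (-(1+2*s)))
      rw [e0, jval, integral_zero, MeasureTheory.integral_const_mul, iv2,
        show (-(1+2*s)+1:ℝ) = -(2*s) by ring, show (-(-(2*s)):ℝ) = 2*s by ring]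
      field_simp
      ring
    calc (∫ w in {w : ℝ | M < |w|}, |φ (ξ + w) + φ (ξ - w) - 2 * φ ξ| / |w| ^ (1 + 2*s))
        ≤ ∫ w in {w : ℝ | M < |w|}, (if |w| ≤ M then (0:ℝ) else 4 * |w| ^ (-(1+2*s))) := step1
      _ ≤ ∫ w : ℝ, (if |w| ≤ M then (0:ℝ) else 4 * |w| ^ (-(1+2*s))) := step2
      _ = (4/s) * M^(-(2*s)) := step3
  -- outer majorant for (i)
  obtain ⟨gint, gval⟩ := my_oneplus_full (a := -(2*s)) (by linarith)
  have hGint : Integrable (fun ξ : ℝ => A * (1+|ξ|)^(-(2*s))) :=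
    my_integrable_comp_abs (gint.const_mul A)
  have hGval : (∫ ξ : ℝ, A * (1+|ξ|)^(-(2*s))) ≤ 2*A*(1 + 1/(2*s-1)) := by
    have e0 : (∫ ξ : ℝ, A * (1+|ξ|)^(-(2*s)))
        = 2 * ∫ x in Ioi (0:ℝ), A * (1+x)^(-(2*s)) :=
      integral_comp_abs (f := fun x => A * (1+x)^(-(2*s)))
    rw [show (1 + 1/(-(-(2*s)+1)):ℝ) = 1 + 1/(2*s-1) by ring] at gval
    rw [e0, MeasureTheory.integral_const_mul]
    nlinarith [mul_le_mul_of_nonneg_left gval hApos.le]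
  have houti : (∫ ξ : ℝ, φ ξ * ∫ w : ℝ,
      |φ (ξ + w) + φ (ξ - w) - 2 * φ ξ| / |w| ^ (1 + 2*s)) ≤ 2*A*(1 + 1/(2*s-1)) := by
    refine (integral_mono_of_nonneg (ae_of_all _ ?_) hGint (ae_of_all _ ?_)).trans hGval
    · intro ξ
      exact mul_nonneg (hφmem ξ).1.le (integral_nonneg (hfnonneg ξ))
    · intro ξ
      calc φ ξ * ∫ w : ℝ, |φ (ξ + w) + φ (ξ - w) - 2 * φ ξ| / |w| ^ (1 + 2*s)
          ≤ 1 * (A * (1+|ξ|)^(-(2*s))) :=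
            mul_le_mul (hφmem ξ).2.le (hinner_full ξ) (integral_nonneg (hfnonneg ξ)) zero_le_one
        _ = A * (1+|ξ|)^(-(2*s)) := one_mul _
  -- outer bound for (ii)
  set CII : ℝ := 32/s + 2*A/(2*s-1) with hCII
  have hCIIpos : 0 < CII := by
    have t1 : 0 < 32/s := by positivity
    have t2 : 0 < 2*A/(2*s-1) := div_pos (by linarith) h2s1
    rw [hCII]; linarith
  have houtii : ∀ M : ℝ, 1 < M →
      (∫ ξ : ℝ, φ ξ * ∫ w in {w : ℝ | M < |w|},
        |φ (ξ + w) + φ (ξ - w) - 2 * φ ξ| / |w| ^ (1 + 2*s)) ≤ CII * M^(1-2*s) := by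
    intro M hM
    have hM0 : (0:ℝ) < M := by linarith
    have h4M : (0:ℝ) < 4*M := by linarith
    have hconst : IntegrableOn (fun _ : ℝ => (4/s)*M^(-(2*s))) (Ioc 0 (4*M)) :=
      (integrableOn_const_iff).mpr (Or.inr measure_Ioc_lt_top)
    obtain ⟨tint, tval⟩ := my_oneplus_tail (a := -(2*s)) (by linarith) h4M
    obtain ⟨jint, jval⟩ := my_piecewise_int h4M hconst (tint.const_mul A)
    have hGMint : Integrable (fun ξ : ℝ =>
        if |ξ| ≤ 4*M then (4/s)*M^(-(2*s)) else A*(1+|ξ|)^(-(2*s))) :=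
      my_integrable_comp_abs jint
    have hGMval : (∫ ξ : ℝ, (if |ξ| ≤ 4*M then (4/s)*M^(-(2*s)) else A*(1+|ξ|)^(-(2*s))))
        ≤ CII * M^(1-2*s) := by
      have e0 : (∫ ξ : ℝ, (if |ξ| ≤ 4*M then (4/s)*M^(-(2*s)) else A*(1+|ξ|)^(-(2*s))))
          = 2 * ∫ x in Ioi (0:ℝ), (if x ≤ 4*M then (4/s)*M^(-(2*s)) else A*(1+x)^(-(2*s))) :=
        integral_comp_abs (f := fun x => if x ≤ 4*M then (4/s)*M^(-(2*s)) else A*(1+x)^(-(2*s)))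
      rw [e0, jval, setIntegral_const, MeasureTheory.integral_const_mul, Real.volume_real_Ioc_of_le (by linarith), smul_eq_mul]
      rw [show (-(2*s)+1:ℝ) = 1-2*s by ring, show (-(1-2*s):ℝ) = 2*s-1 by ring] at tval
      have h4Mle : (4*M)^(1-2*s) ≤ M^(1-2*s) :=
        Real.rpow_le_rpow_of_nonpos hM0 (by linarith) (by linarith)
      have hMM : (4*M - 0) * ((4/s)*M^(-(2*s))) = (16/s)*M^(1-2*s) := by
        have hsplit : M^(1-2*s) = M * M^(-(2*s)) := by
          rw [show (1-2*s:ℝ) = 1 + -(2*s) by ring, Real.rpow_add hM0, Real.rpow_one]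
        rw [hsplit]; ring
      have k1 : A * (∫ x in Ioi (4*M), (1+x)^(-(2*s))) ≤ A * (M^(1-2*s)/(2*s-1)) := by
        refine mul_le_mul_of_nonneg_left (tval.trans ?_) hApos.le
        exact (div_le_div_iff_of_pos_right h2s1).mpr h4Mle
      calc 2 * ((4*M - 0) * ((4/s)*M^(-(2*s))) + A * ∫ x in Ioi (4*M), (1+x)^(-(2*s)))
          ≤ 2 * ((16/s)*M^(1-2*s) + A * (M^(1-2*s)/(2*s-1))) := by rw [hMM]; linarith
        _ = CII * M^(1-2*s) := by rw [hCII]; field_simp; ring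
    refine (integral_mono_of_nonneg (ae_of_all _ ?_) hGMint (ae_of_all _ ?_)).trans hGMval
    · intro ξ
      exact mul_nonneg (hφmem ξ).1.le (integral_nonneg (hfnonneg ξ))
    · intro ξ
      by_cases hcase : |ξ| ≤ 4*M
      · beta_reduce
        rw [if_pos hcase]
        calc φ ξ * ∫ w in {w : ℝ | M < |w|},
              |φ (ξ + w) + φ (ξ - w) - 2 * φ ξ| / |w| ^ (1 + 2*s)
            ≤ 1 * ((4/s)*M^(-(2*s))) :=
              mul_le_mul (hφmem ξ).2.le (hinner_set2 ξ M hM)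
                (integral_nonneg (hfnonneg ξ)) zero_le_one
          _ = (4/s)*M^(-(2*s)) := one_mul _
      · beta_reduce
        rw [if_neg hcase]
        calc φ ξ * ∫ w in {w : ℝ | M < |w|},
              |φ (ξ + w) + φ (ξ - w) - 2 * φ ξ| / |w| ^ (1 + 2*s)
            ≤ 1 * (A * (1+|ξ|)^(-(2*s))) :=
              mul_le_mul (hφmem ξ).2.le (hinner_set1 ξ _)
                (integral_nonneg (hfnonneg ξ)) zero_le_one
          _ = A * (1+|ξ|)^(-(2*s)) := one_mul _
  -- conclusion
  refine ⟨2*A*(1 + 1/(2*s-1)) + CII, ?_, ?_, ?_⟩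
  · have t1 : 0 < 2*A*(1 + 1/(2*s-1)) :=
      mul_pos (by linarith) (by positivity)
    exact add_pos t1 hCIIpos
  · exact houti.trans (le_add_of_nonneg_right hCIIpos.le)
  · intro M hM
    rw [show (-(2*s-1):ℝ) = 1-2*s by ring]
    refine (houtii M hM).trans ?_
    have hMp : 0 ≤ M^(1-2*s) := Real.rpow_nonneg (by linarith) _
    have t1 : 0 < 2*A*(1 + 1/(2*s-1)) :=
      mul_pos (by linarith) (by positivity)
    exact mul_le_mul_of_nonneg_right (le_add_of_nonneg_left t1.le) hMp
end
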